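/- arXiv:1003.5000 — 6 statements merged into one kernel-verified Lean document; each statement's English description precedes it below -/
import Mathlib

section
/- Let s, r ≥ 0 and t ≤ min(s, r) be real numbers with s + r − t > 1/2. Then for all two-sided sequences a ∈ h^s(ℤ) and b ∈ h^r(ℤ) (weighted ℓ² spaces with weight (1+2|k|)^s, resp. (1+2|k|)^r), the convolution (a∗b)(k) = Σ_{j∈ℤ} a(k−j)b(j) converges absolutely for every k, a∗b belongs to h^t(ℤ), and there is a constant C depending only on s, r, t such that ‖a∗b‖_{h^t} ≤ C‖a‖_{h^s}‖b‖_{h^r}. -/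
open scoped BigOperators NNReal ENNReal
open MeasureTheory


/-- Membership in the weighted space `h^σ(ℤ)` with weight `(1+2|k|)^σ`. -/
def memH (σ : ℝ) (a : ℤ → ℂ) : Prop :=
  Summable fun k : ℤ => ((1 + 2 * |(k : ℝ)|) ^ σ) ^ 2 * ‖a k‖ ^ 2

/-- The norm of `h^σ(ℤ)`. -/
noncomputable def hNorm (σ : ℝ) (a : ℤ → ℂ) : ℝ :=
  Real.sqrt (∑' k : ℤ, ((1 + 2 * |(k : ℝ)|) ^ σ) ^ 2 * ‖a k‖ ^ 2)

/-- Convolution of two-sided sequences. -/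
noncomputable def conv (a b : ℤ → ℂ) : ℤ → ℂ := fun k => ∑' j : ℤ, a (k - j) * b j

namespace ConvAux

/-- Cauchy–Schwarz for `ℝ≥0∞`-valued sums over a countable type. -/
lemma tsum_cs {ι : Type*} [Countable ι] [MeasurableSpace ι]
    [MeasurableSingletonClass ι] (f g : ι → ℝ≥0∞) :
    ∑' x, f x * g x ≤ (∑' x, f x ^ (2:ℝ)) ^ ((2:ℝ)⁻¹) * (∑' x, g x ^ (2:ℝ)) ^ ((2:ℝ)⁻¹) := by
  have hpq : Real.HolderConjugate 2 2 := ⟨by norm_num, by norm_num, by norm_num⟩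
  have h := ENNReal.lintegral_mul_le_Lp_mul_Lq (Measure.count : Measure ι) hpq
    (measurable_of_countable f).aemeasurable (measurable_of_countable g).aemeasurable
  simpa [lintegral_count, one_div] using h

/-- The weight as `ℝ≥0`. -/
noncomputable def vw (k : ℤ) : ℝ≥0 := ⟨1 + 2 * |(k : ℝ)|, by positivity⟩

lemma vw_coe (k : ℤ) : ((vw k : ℝ)) = 1 + 2 * |(k : ℝ)| := rfl

lemma one_le_vw (k : ℤ) : 1 ≤ vw k := by
  rw [← NNReal.coe_le_coe, vw_coe, NNReal.coe_one]
  have := abs_nonneg (k : ℝ); linarith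

lemma vw_ne_zero (k : ℤ) : vw k ≠ 0 := by
  have := one_le_vw k; intro h; rw [h] at this; exact absurd this (by norm_num)

/-- The weight as `ℝ≥0∞`. -/
noncomputable def Vw (k : ℤ) : ℝ≥0∞ := (vw k : ℝ≥0∞)

lemma Vw_ne_zero (k : ℤ) : Vw k ≠ 0 := by
  simpa [Vw] using vw_ne_zero k

lemma Vw_ne_top (k : ℤ) : Vw k ≠ ∞ := ENNReal.coe_ne_top

lemma one_le_Vw (k : ℤ) : 1 ≤ Vw k := by
  rw [Vw, ← ENNReal.coe_one, ENNReal.coe_le_coe]; exact one_le_vw k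

lemma Vw_rpow_coe (k : ℤ) (σ : ℝ) : Vw k ^ σ = ((vw k ^ σ : ℝ≥0) : ℝ≥0∞) :=
  (ENNReal.coe_rpow_of_ne_zero (vw_ne_zero k) σ).symm

lemma Vw_rpow_ne_top (k : ℤ) (σ : ℝ) : Vw k ^ σ ≠ ∞ := by
  rw [Vw_rpow_coe]; exact ENNReal.coe_ne_top

lemma Vw_rpow_ne_zero (k : ℤ) (σ : ℝ) : Vw k ^ σ ≠ 0 := by
  simp [ENNReal.rpow_eq_zero_iff, Vw_ne_zero k, Vw_ne_top k]

lemma Vw_mono {i j : ℤ} (h : |i| ≤ |j|) : Vw i ≤ Vw j := by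
  rw [Vw, Vw, ENNReal.coe_le_coe, ← NNReal.coe_le_coe, vw_coe, vw_coe]
  have h' : |(i:ℝ)| ≤ |(j:ℝ)| := by
    rw [← Int.cast_abs, ← Int.cast_abs, Int.cast_le]; exact h
  linarith

lemma Vw_two {i j : ℤ} (h : |i| ≤ |j|) : Vw (i + j) ≤ 2 * Vw j := by
  rw [Vw, Vw, show ((2:ℝ≥0∞)) = ((2:ℝ≥0) : ℝ≥0∞) by norm_num, ← ENNReal.coe_mul,
    ENNReal.coe_le_coe, ← NNReal.coe_le_coe, NNReal.coe_mul, vw_coe, vw_coe]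
  have h' : |(i:ℝ)| ≤ |(j:ℝ)| := by
    rw [← Int.cast_abs, ← Int.cast_abs, Int.cast_le]; exact h
  have h2 : |((i:ℝ) + j)| ≤ |(i:ℝ)| + |(j:ℝ)| := abs_add_le _ _
  have : ((i + j : ℤ) : ℝ) = (i:ℝ) + (j:ℝ) := by push_cast; ring
  rw [this]
  push_cast
  linarith [abs_nonneg ((j:ℝ))]

/-- antitone in base for nonpositive exponents -/
lemma rpow_anti {x y : ℝ≥0∞} (hx : x ≠ 0) (hxy : x ≤ y) {z : ℝ} (hz : z ≤ 0) :
    y ^ z ≤ x ^ z := by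
  have h1 : x ^ (-z) ≤ y ^ (-z) := ENNReal.rpow_le_rpow hxy (by linarith)
  calc y ^ z = (y ^ (-z))⁻¹ := by rw [← ENNReal.rpow_neg, neg_neg]
    _ ≤ (x ^ (-z))⁻¹ := ENNReal.inv_le_inv.mpr h1
    _ = x ^ z := by rw [← ENNReal.rpow_neg, neg_neg]

lemma summable_vw_neg {p : ℝ} (hp : 1 < p) :
    Summable (fun i : ℤ => vw i ^ (-p)) := by
  rw [← NNReal.summable_coe]
  have hcongr : ∀ i : ℤ, ((vw i ^ (-p) : ℝ≥0) : ℝ) = (1 + 2 * |(i:ℝ)|) ^ (-p) := by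
    intro i; rw [NNReal.coe_rpow, vw_coe]
  rw [summable_congr hcongr]
  have hg : Summable (fun i : ℤ => 1 / |(i:ℝ) + (1/2 : ℝ)| ^ p) :=
    (Real.summable_one_div_int_add_rpow (1/2) p).mpr hp
  apply Summable.of_nonneg_of_le (fun i => Real.rpow_nonneg (by positivity) _) _ hg
  intro i
  have h0 : (0:ℝ) < |(i:ℝ) + 1/2| := by
    rcases le_or_gt 0 (i:ℝ) with h | h
    · rw [abs_of_nonneg (by linarith)]; linarith
    · have : (i:ℝ) ≤ -1 := by
        have : (i:ℤ) < 0 := by exact_mod_cast h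
        have : (i:ℤ) ≤ -1 := by omega
        exact_mod_cast this
      rw [abs_of_nonpos (by linarith)]; linarith
  have hle : |(i:ℝ) + 1/2| ≤ 1 + 2 * |(i:ℝ)| := by
    have := abs_add_le (i:ℝ) (1/2)
    have := abs_nonneg (i:ℝ)
    rw [abs_of_nonneg (by norm_num : (0:ℝ) ≤ 1/2)] at *
    linarith [abs_add_le (i:ℝ) (1/2)]
  calc (1 + 2*|(i:ℝ)|) ^ (-p)
      ≤ |(i:ℝ) + 1/2| ^ (-p) := Real.rpow_le_rpow_of_nonpos h0 hle (by linarith)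
    _ = 1 / |(i:ℝ) + 1/2| ^ p := by
        rw [Real.rpow_neg (abs_nonneg _)]; norm_num

lemma Vw_rpow_mono {i j : ℤ} (h : |i| ≤ |j|) {σ : ℝ} (hσ : 0 ≤ σ) :
    Vw i ^ σ ≤ Vw j ^ σ := ENNReal.rpow_le_rpow (Vw_mono h) hσ

lemma Vw_rpow_anti {i j : ℤ} (h : |i| ≤ |j|) {σ : ℝ} (hσ : σ ≤ 0) :
    Vw j ^ σ ≤ Vw i ^ σ := rpow_anti (Vw_ne_zero i) (Vw_mono h) hσ

lemma two_rpow_le_c0 (t : ℝ) : (2:ℝ≥0∞) ^ t ≤ (2:ℝ≥0∞) ^ |t| :=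
  ENNReal.rpow_le_rpow_of_exponent_le (by norm_num) (le_abs_self t)

lemma one_le_c0 (t : ℝ) : 1 ≤ (2:ℝ≥0∞) ^ |t| := by
  calc (1:ℝ≥0∞) = (2:ℝ≥0∞) ^ (0:ℝ) := by simp
    _ ≤ (2:ℝ≥0∞) ^ |t| := ENNReal.rpow_le_rpow_of_exponent_le (by norm_num) (abs_nonneg t)

lemma c0_ne_top (t : ℝ) : (2:ℝ≥0∞) ^ |t| ≠ ∞ := by
  rw [show (2:ℝ≥0∞) = ((2:ℝ≥0):ℝ≥0∞) by norm_num,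
    ← ENNReal.coe_rpow_of_ne_zero (by norm_num)]
  exact ENNReal.coe_ne_top

/-- Kernel estimate in the region where `|i|` is smallest. -/
lemma kernel1 {t r : ℝ} (hr : 0 ≤ r) (htr : t ≤ r) {i j : ℤ}
    (h1 : |i| ≤ |j|) (h2 : |i| ≤ |i + j|) :
    Vw (i + j) ^ t ≤ (2:ℝ≥0∞) ^ |t| * Vw i ^ (t - r) * Vw j ^ r := by
  rcases le_total t 0 with h | h
  · calc Vw (i+j) ^ t ≤ Vw i ^ t := Vw_rpow_anti h2 h
      _ = Vw i ^ (t - r) * Vw i ^ r := by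
          rw [← ENNReal.rpow_add _ _ (Vw_ne_zero i) (Vw_ne_top i)]; ring_nf
      _ ≤ Vw i ^ (t - r) * Vw j ^ r := mul_le_mul' (le_refl _) (Vw_rpow_mono h1 hr)
      _ ≤ (2:ℝ≥0∞) ^ |t| * (Vw i ^ (t - r) * Vw j ^ r) :=
          le_mul_of_one_le_left zero_le (one_le_c0 t)
      _ = (2:ℝ≥0∞) ^ |t| * Vw i ^ (t - r) * Vw j ^ r := by ring
  · calc Vw (i+j) ^ t ≤ (2 * Vw j) ^ t := ENNReal.rpow_le_rpow (Vw_two h1) h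
      _ = (2:ℝ≥0∞) ^ t * Vw j ^ t := ENNReal.mul_rpow_of_nonneg _ _ h
      _ = (2:ℝ≥0∞) ^ t * (Vw j ^ (t - r) * Vw j ^ r) := by
          rw [← ENNReal.rpow_add _ _ (Vw_ne_zero j) (Vw_ne_top j)]; ring_nf
      _ ≤ (2:ℝ≥0∞) ^ |t| * (Vw i ^ (t - r) * Vw j ^ r) :=
          mul_le_mul' (two_rpow_le_c0 t)
            (mul_le_mul' (Vw_rpow_anti h1 (by linarith)) (le_refl _))
      _ = (2:ℝ≥0∞) ^ |t| * Vw i ^ (t - r) * Vw j ^ r := by ring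

/-- Kernel estimate in the region where `|i+j|` is smallest. -/
lemma kernel3 {t s r : ℝ} (hs : 0 ≤ s) (hr : 0 ≤ r) {i j : ℤ}
    (h1 : |i + j| ≤ |i|) (h2 : |i + j| ≤ |j|) :
    Vw (i + j) ^ t ≤ Vw (i + j) ^ (t - s - r) * Vw i ^ s * Vw j ^ r := by
  calc Vw (i+j) ^ t
      = Vw (i+j) ^ (t - s - r) * Vw (i+j) ^ s * Vw (i+j) ^ r := by
        rw [← ENNReal.rpow_add _ _ (Vw_ne_zero _) (Vw_ne_top _),
          ← ENNReal.rpow_add _ _ (Vw_ne_zero _) (Vw_ne_top _)]; ring_nf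
    _ ≤ Vw (i+j) ^ (t - s - r) * Vw i ^ s * Vw j ^ r := by
        exact mul_le_mul' (mul_le_mul' (le_refl _) (Vw_rpow_mono h1 hs)) (Vw_rpow_mono h2 hr)


noncomputable def wA (σ : ℝ) (a : ℤ → ℂ) (k : ℤ) : ℝ≥0 := vw k ^ σ * ‖a k‖₊

noncomputable def Ae (σ : ℝ) (a : ℤ → ℂ) (k : ℤ) : ℝ≥0∞ := Vw k ^ σ * (‖a k‖₊ : ℝ≥0∞)

lemma wA_coeE (σ : ℝ) (a : ℤ → ℂ) (k : ℤ) : ((wA σ a k : ℝ≥0) : ℝ≥0∞) = Ae σ a k := by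
  rw [wA, Ae, ENNReal.coe_mul, Vw_rpow_coe]

lemma wA_coe_sq (σ : ℝ) (a : ℤ → ℂ) (k : ℤ) :
    ((wA σ a k ^ 2 : ℝ≥0) : ℝ) = ((1 + 2 * |(k : ℝ)|) ^ σ) ^ 2 * ‖a k‖ ^ 2 := by
  rw [NNReal.coe_pow, wA, NNReal.coe_mul, NNReal.coe_rpow, vw_coe, coe_nnnorm,
    mul_pow]

lemma memH_iff_nn (σ : ℝ) (a : ℤ → ℂ) :
    memH σ a ↔ Summable (fun k : ℤ => wA σ a k ^ 2) := by
  rw [memH, ← NNReal.summable_coe]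
  exact summable_congr fun k => (wA_coe_sq σ a k).symm

lemma Ae_sq_coe (σ : ℝ) (a : ℤ → ℂ) (k : ℤ) :
    Ae σ a k ^ (2:ℝ) = ((wA σ a k ^ 2 : ℝ≥0) : ℝ≥0∞) := by
  rw [← wA_coeE, ← ENNReal.coe_rpow_of_nonneg _ (by norm_num : (0:ℝ) ≤ 2)]
  congr 1
  rw [show (2:ℝ) = ((2:ℕ):ℝ) by norm_num, NNReal.rpow_natCast]

lemma tsumE_eq (σ : ℝ) (a : ℤ → ℂ) (h : Summable fun k => wA σ a k ^ 2) :
    ∑' k : ℤ, Ae σ a k ^ (2:ℝ) = ((∑' k : ℤ, wA σ a k ^ 2 : ℝ≥0) : ℝ≥0∞) := by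
  rw [ENNReal.coe_tsum h]
  exact tsum_congr fun k => Ae_sq_coe σ a k

lemma tsum_real_eq (σ : ℝ) (a : ℤ → ℂ) (h : Summable fun k => wA σ a k ^ 2) :
    (∑' k : ℤ, ((1 + 2 * |(k : ℝ)|) ^ σ) ^ 2 * ‖a k‖ ^ 2)
      = ((∑' k : ℤ, wA σ a k ^ 2 : ℝ≥0) : ℝ) := by
  rw [NNReal.coe_tsum]
  exact tsum_congr fun k => (wA_coe_sq σ a k).symm

lemma hNorm_sq (σ : ℝ) (a : ℤ → ℂ) :
    hNorm σ a ^ 2 = ∑' k : ℤ, ((1 + 2 * |(k : ℝ)|) ^ σ) ^ 2 * ‖a k‖ ^ 2 :=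
  Real.sq_sqrt (tsum_nonneg fun k => by positivity)

lemma sq_rpow (x : ℝ≥0∞) : x ^ (2:ℝ) = x * x := by
  rw [show (2:ℝ) = ((2:ℕ):ℝ) by norm_num, ENNReal.rpow_natCast, sq]


def shear : ℤ × ℤ ≃ ℤ × ℤ :=
  ⟨fun p => (p.1 - p.2, p.2), fun p => (p.1 + p.2, p.2),
    fun p => by simp, fun p => by simp⟩

lemma trilinear (s r t q : ℝ) (hs : 0 ≤ s) (hr : 0 ≤ r) (hts : t ≤ s) (htr : t ≤ r)
    (hq : q = s + r - t) (a b : ℤ → ℂ) (C : ℤ → ℝ≥0∞) :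
    ∑' k : ℤ, C k * (Vw k ^ t * ∑' j : ℤ, ((‖a (k - j)‖₊ * ‖b j‖₊ : ℝ≥0) : ℝ≥0∞)) ≤
      3 * ((2:ℝ≥0∞) ^ |t|) * (∑' i : ℤ, Vw i ^ (-(2*q))) ^ (2⁻¹:ℝ) *
        (∑' i : ℤ, Ae s a i ^ (2:ℝ)) ^ (2⁻¹:ℝ) *
        (∑' j : ℤ, Ae r b j ^ (2:ℝ)) ^ (2⁻¹:ℝ) *
        (∑' k : ℤ, C k ^ (2:ℝ)) ^ (2⁻¹:ℝ) := by
  classical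
  set c0 : ℝ≥0∞ := (2:ℝ≥0∞) ^ |t| with hc0
  set Z : ℝ≥0∞ := ∑' i : ℤ, Vw i ^ (-(2*q)) with hZ
  set NA : ℝ≥0∞ := ∑' i : ℤ, Ae s a i ^ (2:ℝ) with hNA
  set NB : ℝ≥0∞ := ∑' j : ℤ, Ae r b j ^ (2:ℝ) with hNB
  set NC : ℝ≥0∞ := ∑' k : ℤ, C k ^ (2:ℝ) with hNC
  set H : ℤ × ℤ → ℝ≥0∞ := fun p =>
    Vw (p.1 + p.2) ^ t * (‖a p.1‖₊ : ℝ≥0∞) * (‖b p.2‖₊ : ℝ≥0∞) * C (p.1 + p.2) with hH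
  -- Step 1: rewrite the LHS as a sum over ℤ × ℤ
  have step1 : (∑' k : ℤ, C k * (Vw k ^ t * ∑' j : ℤ, ((‖a (k - j)‖₊ * ‖b j‖₊ : ℝ≥0) : ℝ≥0∞)))
      = ∑' p : ℤ × ℤ, H p := by
    rw [← Equiv.tsum_eq shear H, ENNReal.tsum_prod']
    refine tsum_congr fun k => ?_
    have he : ∀ j : ℤ, H (shear (k, j)) =
        (C k * Vw k ^ t) * ((‖a (k - j)‖₊ : ℝ≥0∞) * (‖b j‖₊ : ℝ≥0∞)) := by
      intro j
      show H (k - j, j) = _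
      have hkj : k - j + j = k := by ring
      rw [hH]
      simp only [hkj]
      ring
    rw [tsum_congr he, ENNReal.tsum_mul_left]
    simp_rw [ENNReal.coe_mul]
    ring
  rw [step1]
  -- the three regions
  set c1 : ℤ × ℤ → Prop := fun p => |p.1| ≤ |p.2| ∧ |p.1| ≤ |p.1 + p.2| with hc1
  set c2 : ℤ × ℤ → Prop := fun p => |p.2| ≤ |p.1| ∧ |p.2| ≤ |p.1 + p.2| with hc2
  set c3 : ℤ × ℤ → Prop := fun p => |p.1 + p.2| ≤ |p.1| ∧ |p.1 + p.2| ≤ |p.2| with hc3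
  have cover : ∀ p : ℤ × ℤ, H p ≤
      ((if c1 p then H p else 0) + (if c2 p then H p else 0)) + (if c3 p then H p else 0) := by
    intro p
    have habc : c1 p ∨ c2 p ∨ c3 p := by
      rcases le_total |p.1| |p.2| with h12 | h21
      · rcases le_total |p.1| |p.1 + p.2| with h1k | hk1
        · exact Or.inl ⟨h12, h1k⟩
        · exact Or.inr (Or.inr ⟨hk1, le_trans hk1 h12⟩)
      · rcases le_total |p.2| |p.1 + p.2| with h2k | hk2
        · exact Or.inr (Or.inl ⟨h21, h2k⟩)
        · exact Or.inr (Or.inr ⟨le_trans hk2 h21, hk2⟩)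
    rcases habc with h | h | h
    · rw [if_pos h]
      exact le_trans (self_le_add_right _ _) (self_le_add_right _ _)
    · rw [if_pos h]
      exact le_trans (le_add_self) (self_le_add_right _ _)
    · rw [if_pos h]
      exact le_add_self
  have hsplit : ∑' p : ℤ × ℤ, H p ≤
      (∑' p : ℤ × ℤ, (if c1 p then H p else 0)) + (∑' p : ℤ × ℤ, (if c2 p then H p else 0))
        + (∑' p : ℤ × ℤ, (if c3 p then H p else 0)) := by
    calc ∑' p : ℤ × ℤ, H p
        ≤ ∑' p : ℤ × ℤ, (((if c1 p then H p else 0) + (if c2 p then H p else 0))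
            + (if c3 p then H p else 0)) := ENNReal.tsum_le_tsum cover
      _ = _ := by rw [ENNReal.tsum_add, ENNReal.tsum_add]
  -- the common bound for each region
  set R : ℝ≥0∞ := c0 * Z ^ (2⁻¹:ℝ) * NA ^ (2⁻¹:ℝ) * NB ^ (2⁻¹:ℝ) * NC ^ (2⁻¹:ℝ) with hR
  -- auxiliary squared sums
  have hsq : ∀ x y : ℝ≥0∞, (x * y) ^ (2:ℝ) = x ^ (2:ℝ) * y ^ (2:ℝ) := fun x y =>
    ENNReal.mul_rpow_of_nonneg x y (by norm_num)
  have hVsq : ∀ i : ℤ, (Vw i ^ (-q)) ^ (2:ℝ) = Vw i ^ (-(2*q)) := by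
    intro i
    rw [← ENNReal.rpow_mul]
    congr 1; ring
  have hCshift : ∀ i : ℤ, ∑' j : ℤ, C (i + j) ^ (2:ℝ) = NC := by
    intro i
    rw [hNC]
    exact Equiv.tsum_eq (Equiv.addLeft i) fun k => C k ^ (2:ℝ)
  have hCshift' : ∀ j : ℤ, ∑' i : ℤ, C (i + j) ^ (2:ℝ) = NC := by
    intro j
    rw [hNC]
    exact Equiv.tsum_eq (Equiv.addRight j) fun k => C k ^ (2:ℝ)
  have hZshift : ∀ i : ℤ, ∑' j : ℤ, Vw (i + j) ^ (-(2*q)) = Z := by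
    intro i
    rw [hZ]
    exact Equiv.tsum_eq (Equiv.addLeft i) fun k => Vw k ^ (-(2*q))
  have hc0sq : (c0 ^ (2:ℝ)) ^ (2⁻¹:ℝ) = c0 := by
    rw [← ENNReal.rpow_mul]
    norm_num
  -- second factors
  have hAC : ∑' p : ℤ × ℤ, (Ae s a p.1 * C (p.1 + p.2)) ^ (2:ℝ) = NA * NC := by
    rw [ENNReal.tsum_prod']
    have : ∀ i : ℤ, ∑' j : ℤ, (Ae s a i * C (i + j)) ^ (2:ℝ) = Ae s a i ^ (2:ℝ) * NC := by
      intro i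
      rw [← hCshift i, ← ENNReal.tsum_mul_left]
      exact tsum_congr fun j => hsq _ _
    rw [tsum_congr this, ENNReal.tsum_mul_right]
  have hBC : ∑' p : ℤ × ℤ, (Ae r b p.2 * C (p.1 + p.2)) ^ (2:ℝ) = NB * NC := by
    rw [ENNReal.tsum_prod', ENNReal.tsum_comm]
    have : ∀ j : ℤ, ∑' i : ℤ, (Ae r b j * C (i + j)) ^ (2:ℝ) = Ae r b j ^ (2:ℝ) * NC := by
      intro j
      rw [← hCshift' j, ← ENNReal.tsum_mul_left]
      exact tsum_congr fun i => hsq _ _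
    rw [tsum_congr this, ENNReal.tsum_mul_right]
  -- region 1
  have hT1 : ∑' p : ℤ × ℤ, (if c1 p then H p else 0) ≤ R := by
    set f : ℤ × ℤ → ℝ≥0∞ := fun p => c0 * Vw p.1 ^ (-q) * Ae r b p.2 with hf
    set g : ℤ × ℤ → ℝ≥0∞ := fun p => Ae s a p.1 * C (p.1 + p.2) with hg
    have hpt : ∀ p : ℤ × ℤ, (if c1 p then H p else 0) ≤ f p * g p := by
      intro p
      by_cases h : c1 p
      · rw [if_pos h]
        have hk := kernel1 hr htr h.1 h.2
        have hsplitpow : Vw p.1 ^ (t - r) = Vw p.1 ^ (-q) * Vw p.1 ^ s := by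
          rw [← ENNReal.rpow_add _ _ (Vw_ne_zero _) (Vw_ne_top _)]
          congr 1; rw [hq]; ring
        calc H p = Vw (p.1 + p.2) ^ t *
              ((‖a p.1‖₊ : ℝ≥0∞) * (‖b p.2‖₊ : ℝ≥0∞) * C (p.1 + p.2)) := by rw [hH]; ring
          _ ≤ (c0 * Vw p.1 ^ (t - r) * Vw p.2 ^ r) *
              ((‖a p.1‖₊ : ℝ≥0∞) * (‖b p.2‖₊ : ℝ≥0∞) * C (p.1 + p.2)) :=
            mul_le_mul' hk (le_refl _)
          _ = f p * g p := by rw [hf, hg, hsplitpow]; simp only [Ae]; ring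
      · rw [if_neg h]; exact zero_le
    have hfsum : ∑' p : ℤ × ℤ, f p ^ (2:ℝ) = c0 ^ (2:ℝ) * Z * NB := by
      rw [ENNReal.tsum_prod']
      have h1 : ∀ i : ℤ, ∑' j : ℤ, f (i, j) ^ (2:ℝ)
          = (c0 ^ (2:ℝ) * Vw i ^ (-(2*q))) * NB := by
        intro i
        rw [hNB, ← ENNReal.tsum_mul_left]
        refine tsum_congr fun j => ?_
        rw [hf]
        show (c0 * Vw i ^ (-q) * Ae r b j) ^ (2:ℝ) = _
        rw [hsq, hsq, hVsq]
      rw [tsum_congr h1, ENNReal.tsum_mul_right, ENNReal.tsum_mul_left]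
    calc ∑' p : ℤ × ℤ, (if c1 p then H p else 0)
        ≤ ∑' p : ℤ × ℤ, f p * g p := ENNReal.tsum_le_tsum hpt
      _ ≤ (∑' p : ℤ × ℤ, f p ^ (2:ℝ)) ^ (2⁻¹:ℝ) * (∑' p : ℤ × ℤ, g p ^ (2:ℝ)) ^ (2⁻¹:ℝ) :=
          tsum_cs f g
      _ = (c0 ^ (2:ℝ) * Z * NB) ^ (2⁻¹:ℝ) * (NA * NC) ^ (2⁻¹:ℝ) := by rw [hfsum, hg, hAC]
      _ = R := by
          rw [ENNReal.mul_rpow_of_nonneg _ _ (by norm_num : (0:ℝ) ≤ 2⁻¹),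
            ENNReal.mul_rpow_of_nonneg _ _ (by norm_num : (0:ℝ) ≤ 2⁻¹),
            ENNReal.mul_rpow_of_nonneg _ _ (by norm_num : (0:ℝ) ≤ 2⁻¹), hc0sq, hR]
          ring
  -- region 2
  have hT2 : ∑' p : ℤ × ℤ, (if c2 p then H p else 0) ≤ R := by
    set f : ℤ × ℤ → ℝ≥0∞ := fun p => c0 * Vw p.2 ^ (-q) * Ae s a p.1 with hf
    set g : ℤ × ℤ → ℝ≥0∞ := fun p => Ae r b p.2 * C (p.1 + p.2) with hg
    have hpt : ∀ p : ℤ × ℤ, (if c2 p then H p else 0) ≤ f p * g p := by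
      intro p
      by_cases h : c2 p
      · rw [if_pos h]
        have h2' : |p.2| ≤ |p.2 + p.1| := by rw [add_comm]; exact h.2
        have hk := kernel1 hs hts h.1 h2'
        rw [add_comm p.2 p.1] at hk
        have hsplitpow : Vw p.2 ^ (t - s) = Vw p.2 ^ (-q) * Vw p.2 ^ r := by
          rw [← ENNReal.rpow_add _ _ (Vw_ne_zero _) (Vw_ne_top _)]
          congr 1; rw [hq]; ring
        calc H p = Vw (p.1 + p.2) ^ t *
              ((‖a p.1‖₊ : ℝ≥0∞) * (‖b p.2‖₊ : ℝ≥0∞) * C (p.1 + p.2)) := by rw [hH]; ring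
          _ ≤ (c0 * Vw p.2 ^ (t - s) * Vw p.1 ^ s) *
              ((‖a p.1‖₊ : ℝ≥0∞) * (‖b p.2‖₊ : ℝ≥0∞) * C (p.1 + p.2)) :=
            mul_le_mul' hk (le_refl _)
          _ = f p * g p := by rw [hf, hg, hsplitpow]; simp only [Ae]; ring
      · rw [if_neg h]; exact zero_le
    have hfsum : ∑' p : ℤ × ℤ, f p ^ (2:ℝ) = c0 ^ (2:ℝ) * NA * Z := by
      rw [ENNReal.tsum_prod']
      have h1 : ∀ i : ℤ, ∑' j : ℤ, f (i, j) ^ (2:ℝ)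
          = (c0 ^ (2:ℝ) * Ae s a i ^ (2:ℝ)) * Z := by
        intro i
        rw [hZ, ← ENNReal.tsum_mul_left]
        refine tsum_congr fun j => ?_
        rw [hf]
        show (c0 * Vw j ^ (-q) * Ae s a i) ^ (2:ℝ) = _
        rw [hsq, hsq, hVsq]
        ring
      rw [tsum_congr h1, ENNReal.tsum_mul_right, ENNReal.tsum_mul_left]
    calc ∑' p : ℤ × ℤ, (if c2 p then H p else 0)
        ≤ ∑' p : ℤ × ℤ, f p * g p := ENNReal.tsum_le_tsum hpt
      _ ≤ (∑' p : ℤ × ℤ, f p ^ (2:ℝ)) ^ (2⁻¹:ℝ) * (∑' p : ℤ × ℤ, g p ^ (2:ℝ)) ^ (2⁻¹:ℝ) :=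
          tsum_cs f g
      _ = (c0 ^ (2:ℝ) * NA * Z) ^ (2⁻¹:ℝ) * (NB * NC) ^ (2⁻¹:ℝ) := by rw [hfsum, hg, hBC]
      _ = R := by
          rw [ENNReal.mul_rpow_of_nonneg _ _ (by norm_num : (0:ℝ) ≤ 2⁻¹),
            ENNReal.mul_rpow_of_nonneg _ _ (by norm_num : (0:ℝ) ≤ 2⁻¹),
            ENNReal.mul_rpow_of_nonneg _ _ (by norm_num : (0:ℝ) ≤ 2⁻¹), hc0sq, hR]
          ring
  -- region 3
  have hT3 : ∑' p : ℤ × ℤ, (if c3 p then H p else 0) ≤ R := by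
    set f : ℤ × ℤ → ℝ≥0∞ := fun p => c0 * Vw (p.1 + p.2) ^ (-q) * Ae s a p.1 with hf
    set g : ℤ × ℤ → ℝ≥0∞ := fun p => Ae r b p.2 * C (p.1 + p.2) with hg
    have hpt : ∀ p : ℤ × ℤ, (if c3 p then H p else 0) ≤ f p * g p := by
      intro p
      by_cases h : c3 p
      · rw [if_pos h]
        have hk := kernel3 (t := t) (s := s) (r := r) hs hr h.1 h.2
        have hneg : t - s - r = -q := by rw [hq]; ring
        rw [hneg] at hk
        calc H p = Vw (p.1 + p.2) ^ t *
              ((‖a p.1‖₊ : ℝ≥0∞) * (‖b p.2‖₊ : ℝ≥0∞) * C (p.1 + p.2)) := by rw [hH]; ring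
          _ ≤ (Vw (p.1 + p.2) ^ (-q) * Vw p.1 ^ s * Vw p.2 ^ r) *
              ((‖a p.1‖₊ : ℝ≥0∞) * (‖b p.2‖₊ : ℝ≥0∞) * C (p.1 + p.2)) :=
            mul_le_mul' hk (le_refl _)
          _ ≤ c0 * ((Vw (p.1 + p.2) ^ (-q) * Vw p.1 ^ s * Vw p.2 ^ r) *
              ((‖a p.1‖₊ : ℝ≥0∞) * (‖b p.2‖₊ : ℝ≥0∞) * C (p.1 + p.2))) :=
            le_mul_of_one_le_left zero_le (one_le_c0 t)
          _ = f p * g p := by rw [hf, hg]; simp only [Ae]; ring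
      · rw [if_neg h]; exact zero_le
    have hfsum : ∑' p : ℤ × ℤ, f p ^ (2:ℝ) = c0 ^ (2:ℝ) * NA * Z := by
      rw [ENNReal.tsum_prod']
      have h1 : ∀ i : ℤ, ∑' j : ℤ, f (i, j) ^ (2:ℝ)
          = (c0 ^ (2:ℝ) * Ae s a i ^ (2:ℝ)) * Z := by
        intro i
        rw [← hZshift i, ← ENNReal.tsum_mul_left]
        refine tsum_congr fun j => ?_
        rw [hf]
        show (c0 * Vw (i + j) ^ (-q) * Ae s a i) ^ (2:ℝ) = _
        rw [hsq, hsq, hVsq]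
        ring
      rw [tsum_congr h1, ENNReal.tsum_mul_right, ENNReal.tsum_mul_left]
    calc ∑' p : ℤ × ℤ, (if c3 p then H p else 0)
        ≤ ∑' p : ℤ × ℤ, f p * g p := ENNReal.tsum_le_tsum hpt
      _ ≤ (∑' p : ℤ × ℤ, f p ^ (2:ℝ)) ^ (2⁻¹:ℝ) * (∑' p : ℤ × ℤ, g p ^ (2:ℝ)) ^ (2⁻¹:ℝ) :=
          tsum_cs f g
      _ = (c0 ^ (2:ℝ) * NA * Z) ^ (2⁻¹:ℝ) * (NB * NC) ^ (2⁻¹:ℝ) := by rw [hfsum, hg, hBC]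
      _ = R := by
          rw [ENNReal.mul_rpow_of_nonneg _ _ (by norm_num : (0:ℝ) ≤ 2⁻¹),
            ENNReal.mul_rpow_of_nonneg _ _ (by norm_num : (0:ℝ) ≤ 2⁻¹),
            ENNReal.mul_rpow_of_nonneg _ _ (by norm_num : (0:ℝ) ≤ 2⁻¹), hc0sq, hR]
          ring
  calc ∑' p : ℤ × ℤ, H p ≤ _ := hsplit
    _ ≤ R + R + R := add_le_add (add_le_add hT1 hT2) hT3
    _ = 3 * R := by ring
    _ = 3 * c0 * Z ^ (2⁻¹:ℝ) * NA ^ (2⁻¹:ℝ) * NB ^ (2⁻¹:ℝ) * NC ^ (2⁻¹:ℝ) := by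
        rw [hR]; ring


lemma one_le_Vw_rpow (k : ℤ) {σ : ℝ} (hσ : 0 ≤ σ) : 1 ≤ Vw k ^ σ := by
  calc (1:ℝ≥0∞) = 1 ^ σ := (ENNReal.one_rpow σ).symm
    _ ≤ Vw k ^ σ := ENNReal.rpow_le_rpow (one_le_Vw k) hσ

lemma half_sq (x : ℝ≥0∞) : (x ^ (2⁻¹:ℝ)) ^ (2:ℝ) = x := by
  rw [← ENNReal.rpow_mul]
  norm_num

end ConvAux

set_option maxHeartbeats 2000000 in
open ConvAux in
/-- The Convolution Lemma, part (a): `h^s(ℤ) × h^r(ℤ) → h^t(ℤ)`. -/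
theorem convolution_lemma_a (s r t : ℝ) (hs : 0 ≤ s) (hr : 0 ≤ r)
    (ht : t ≤ min s r) (hsrt : 1 / 2 < s + r - t) :
    ∃ C : ℝ, 0 < C ∧ ∀ a b : ℤ → ℂ, memH s a → memH r b →
      (∀ k : ℤ, Summable fun j : ℤ => ‖a (k - j) * b j‖) ∧
      memH t (conv a b) ∧
      hNorm t (conv a b) ≤ C * hNorm s a * hNorm r b := by
  classical
  have hts : t ≤ s := le_trans ht (min_le_left _ _)
  have htr : t ≤ r := le_trans ht (min_le_right _ _)
  set q : ℝ := s + r - t with hq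
  have hq1 : (1:ℝ) < 2 * q := by rw [hq]; linarith
  set c0 : ℝ≥0∞ := (2:ℝ≥0∞) ^ |t| with hc0
  set Z : ℝ≥0∞ := ∑' i : ℤ, Vw i ^ (-(2*q)) with hZdef
  have hZtop : Z ≠ ∞ := by
    rw [hZdef]
    simp_rw [Vw_rpow_coe]
    rw [← ENNReal.coe_tsum (summable_vw_neg hq1)]
    exact ENNReal.coe_ne_top
  have h3c0top : (3 * c0) ^ (2:ℝ) ≠ ∞ := by
    refine ENNReal.rpow_ne_top_of_nonneg (by norm_num) (ENNReal.mul_ne_top ?_ (c0_ne_top t))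
    simp
  set κ : ℝ := ((3 * c0) ^ (2:ℝ) * Z).toReal with hκ
  have hκ0 : 0 ≤ κ := ENNReal.toReal_nonneg
  refine ⟨max (Real.sqrt κ) 1, lt_of_lt_of_le one_pos (le_max_right _ _), ?_⟩
  intro a b ha hb
  have hA : Summable fun k => wA s a k ^ 2 := (memH_iff_nn s a).mp ha
  have hB : Summable fun k => wA r b k ^ 2 := (memH_iff_nn r b).mp hb
  set NA : ℝ≥0∞ := ∑' i : ℤ, Ae s a i ^ (2:ℝ) with hNA
  set NB : ℝ≥0∞ := ∑' j : ℤ, Ae r b j ^ (2:ℝ) with hNB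
  have hNAc : NA = ((∑' k, wA s a k ^ 2 : ℝ≥0) : ℝ≥0∞) := tsumE_eq s a hA
  have hNBc : NB = ((∑' k, wA r b k ^ 2 : ℝ≥0) : ℝ≥0∞) := tsumE_eq r b hB
  have hNAtop : NA ≠ ∞ := by rw [hNAc]; exact ENNReal.coe_ne_top
  have hNBtop : NB ≠ ∞ := by rw [hNBc]; exact ENNReal.coe_ne_top
  set G : ℤ → ℝ≥0∞ := fun k => ∑' j : ℤ, ((‖a (k - j)‖₊ * ‖b j‖₊ : ℝ≥0) : ℝ≥0∞) with hG
  have hGle : ∀ k : ℤ, G k ≤ NA ^ (2⁻¹:ℝ) * NB ^ (2⁻¹:ℝ) := by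
    intro k
    have h1 : ∀ j : ℤ, ((‖a (k - j)‖₊ * ‖b j‖₊ : ℝ≥0) : ℝ≥0∞) ≤ Ae s a (k - j) * Ae r b j := by
      intro j
      rw [ENNReal.coe_mul]
      exact mul_le_mul' (le_mul_of_one_le_left zero_le (one_le_Vw_rpow _ hs))
        (le_mul_of_one_le_left zero_le (one_le_Vw_rpow _ hr))
    have h2 : ∑' j : ℤ, Ae s a (k - j) ^ (2:ℝ) = NA := by
      rw [hNA]
      exact Equiv.tsum_eq (Equiv.subLeft k) fun i => Ae s a i ^ (2:ℝ)
    calc G k ≤ ∑' j : ℤ, Ae s a (k - j) * Ae r b j := ENNReal.tsum_le_tsum h1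
      _ ≤ (∑' j : ℤ, Ae s a (k - j) ^ (2:ℝ)) ^ (2⁻¹:ℝ) *
          (∑' j : ℤ, Ae r b j ^ (2:ℝ)) ^ (2⁻¹:ℝ) :=
        tsum_cs (fun j => Ae s a (k - j)) (fun j => Ae r b j)
      _ = NA ^ (2⁻¹:ℝ) * NB ^ (2⁻¹:ℝ) := by rw [h2, hNB]
  have hGtop : ∀ k : ℤ, G k ≠ ∞ := by
    intro k
    refine ne_top_of_le_ne_top (ENNReal.mul_ne_top ?_ ?_) (hGle k) <;>
      exact ENNReal.rpow_ne_top_of_nonneg (by norm_num) (by assumption)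
  have hsum2 : ∀ k : ℤ, Summable fun j : ℤ => ‖a (k - j)‖₊ * ‖b j‖₊ := by
    intro k
    exact ENNReal.tsum_coe_ne_top_iff_summable.mp (hGtop k)
  have part1 : ∀ k : ℤ, Summable fun j : ℤ => ‖a (k - j) * b j‖ := by
    intro k
    refine (summable_congr fun j => ?_).mp (NNReal.summable_coe.mpr (hsum2 k))
    rw [NNReal.coe_mul, coe_nnnorm, coe_nnnorm,
      ← norm_mul]
  have hconvle : ∀ k : ℤ, (‖conv a b k‖₊ : ℝ≥0∞) ≤ G k := by
    intro k
    have hnn : Summable fun j : ℤ => ‖a (k - j) * b j‖₊ :=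
      (summable_congr fun j => nnnorm_mul (a (k-j)) (b j)).mpr (hsum2 k)
    have hsumn : Summable fun j : ℤ => ‖a (k - j) * b j‖ := by
      have h' := NNReal.summable_coe.mpr hnn
      simpa [coe_nnnorm] using h'
    have h0 : ‖conv a b k‖ ≤ ∑' j : ℤ, ‖a (k - j) * b j‖ := norm_tsum_le_tsum_norm hsumn
    have h1 : ‖conv a b k‖₊ ≤ ∑' j : ℤ, ‖a (k - j) * b j‖₊ := by
      rw [← NNReal.coe_le_coe, NNReal.coe_tsum, coe_nnnorm]
      simpa [coe_nnnorm] using h0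
    calc (‖conv a b k‖₊ : ℝ≥0∞) ≤ ((∑' j : ℤ, ‖a (k - j) * b j‖₊ : ℝ≥0) : ℝ≥0∞) :=
        ENNReal.coe_le_coe.mpr h1
      _ = ∑' j : ℤ, ((‖a (k - j) * b j‖₊ : ℝ≥0) : ℝ≥0∞) := ENNReal.coe_tsum hnn
      _ = G k := by rw [hG]; exact tsum_congr fun j => by rw [nnnorm_mul]
  -- the main estimate over finite sets
  have key2 : ∀ S : Finset ℤ, (∑ k ∈ S, (Vw k ^ t * G k) ^ (2:ℝ)) ≤
      (3 * c0) ^ (2:ℝ) * Z * NA * NB := by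
    intro S
    set Cf : ℤ → ℝ≥0∞ := fun k => if k ∈ S then Vw k ^ t * G k else 0 with hCf
    have hCfin : ∀ k : ℤ, Vw k ^ t * G k ≠ ∞ := fun k =>
      ENNReal.mul_ne_top (Vw_rpow_ne_top k t) (hGtop k)
    set P : ℝ≥0∞ := ∑ k ∈ S, (Vw k ^ t * G k) ^ (2:ℝ) with hP
    have hNCeq : (∑' k : ℤ, Cf k ^ (2:ℝ)) = P := by
      rw [hP]
      calc (∑' k : ℤ, Cf k ^ (2:ℝ)) = ∑ k ∈ S, Cf k ^ (2:ℝ) :=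
          tsum_eq_sum (fun k hk => by
            rw [hCf]; simp only [if_neg hk]; exact ENNReal.zero_rpow_of_pos (by norm_num))
        _ = ∑ k ∈ S, (Vw k ^ t * G k) ^ (2:ℝ) :=
          Finset.sum_congr rfl fun k hk => by rw [hCf]; simp only [if_pos hk]
    have hPtop : P ≠ ∞ := by
      rw [hP]
      refine (ENNReal.sum_lt_top.mpr fun k _ => ?_).ne
      exact ENNReal.rpow_lt_top_of_nonneg (by norm_num) (hCfin k)
    have hTCP : (∑' k : ℤ, Cf k * (Vw k ^ t * G k)) = P := by
      rw [hP]
      calc (∑' k : ℤ, Cf k * (Vw k ^ t * G k)) = ∑ k ∈ S, Cf k * (Vw k ^ t * G k) :=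
          tsum_eq_sum (fun k hk => by rw [hCf]; simp only [if_neg hk, zero_mul])
        _ = ∑ k ∈ S, (Vw k ^ t * G k) ^ (2:ℝ) :=
          Finset.sum_congr rfl fun k hk => by
            rw [hCf]; simp only [if_pos hk]; rw [sq_rpow]
    have htri : (∑' k : ℤ, Cf k * (Vw k ^ t * G k)) ≤
        3 * c0 * Z ^ (2⁻¹:ℝ) * NA ^ (2⁻¹:ℝ) * NB ^ (2⁻¹:ℝ) *
          (∑' k : ℤ, Cf k ^ (2:ℝ)) ^ (2⁻¹:ℝ) :=
      trilinear s r t q hs hr hts htr hq a b Cf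
    rw [hTCP, hNCeq] at htri
    by_cases hP0 : P = 0
    · rw [hP0]; exact zero_le
    · have hPh : P ^ (2⁻¹:ℝ) ≠ 0 := by
        simp [ENNReal.rpow_eq_zero_iff, hP0, hPtop]
      have hPh' : P ^ (2⁻¹:ℝ) ≠ ∞ := ENNReal.rpow_ne_top_of_nonneg (by norm_num) hPtop
      have hPsplit : P = P ^ (2⁻¹:ℝ) * P ^ (2⁻¹:ℝ) := by
        rw [← ENNReal.rpow_add _ _ hP0 hPtop]
        norm_num
      have hcancel : P ^ (2⁻¹:ℝ) ≤ 3 * c0 * Z ^ (2⁻¹:ℝ) * NA ^ (2⁻¹:ℝ) * NB ^ (2⁻¹:ℝ) := by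
        rw [← ENNReal.mul_le_mul_iff_left hPh hPh']
        calc P ^ (2⁻¹:ℝ) * P ^ (2⁻¹:ℝ) = P := hPsplit.symm
          _ ≤ _ := htri
      have h2 : (0:ℝ) ≤ 2⁻¹ := by norm_num
      calc P = (P ^ (2⁻¹:ℝ)) ^ (2:ℝ) := (half_sq P).symm
        _ ≤ (3 * c0 * Z ^ (2⁻¹:ℝ) * NA ^ (2⁻¹:ℝ) * NB ^ (2⁻¹:ℝ)) ^ (2:ℝ) :=
          ENNReal.rpow_le_rpow hcancel (by norm_num)
        _ = (3 * c0) ^ (2:ℝ) * Z * NA * NB := by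
          rw [ENNReal.mul_rpow_of_nonneg _ _ (by norm_num : (0:ℝ) ≤ 2),
            ENNReal.mul_rpow_of_nonneg _ _ (by norm_num : (0:ℝ) ≤ 2),
            ENNReal.mul_rpow_of_nonneg _ _ (by norm_num : (0:ℝ) ≤ 2),
            half_sq, half_sq, half_sq]
  have hX : (∑' k : ℤ, (Vw k ^ t * G k) ^ (2:ℝ)) ≤ (3 * c0) ^ (2:ℝ) * Z * NA * NB := by
    rw [ENNReal.tsum_eq_iSup_sum]
    exact iSup_le key2
  have hMtop : (3 * c0) ^ (2:ℝ) * Z * NA * NB ≠ ∞ :=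
    ENNReal.mul_ne_top (ENNReal.mul_ne_top (ENNReal.mul_ne_top h3c0top hZtop) hNAtop) hNBtop
  have hconvsq : ∀ k : ℤ, ((wA t (conv a b) k ^ 2 : ℝ≥0) : ℝ≥0∞) ≤ (Vw k ^ t * G k) ^ (2:ℝ) := by
    intro k
    rw [← Ae_sq_coe]
    refine ENNReal.rpow_le_rpow ?_ (by norm_num)
    show Vw k ^ t * (‖conv a b k‖₊ : ℝ≥0∞) ≤ Vw k ^ t * G k
    exact mul_le_mul' le_rfl (hconvle k)
  have hchain : ((∑' k : ℤ, wA t (conv a b) k ^ 2 : ℝ≥0) : ℝ≥0∞) ≤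
      (3 * c0) ^ (2:ℝ) * Z * NA * NB ∨ True := Or.inr trivial
  have hsumconv : Summable fun k : ℤ => wA t (conv a b) k ^ 2 := by
    apply ENNReal.tsum_coe_ne_top_iff_summable.mp
    exact ne_top_of_le_ne_top hMtop (le_trans (ENNReal.tsum_le_tsum hconvsq) hX)
  have hmemt : memH t (conv a b) := (memH_iff_nn t (conv a b)).mpr hsumconv
  refine ⟨part1, hmemt, ?_⟩
  -- the norm estimate
  have hle : ((∑' k : ℤ, wA t (conv a b) k ^ 2 : ℝ≥0) : ℝ≥0∞) ≤
      (3 * c0) ^ (2:ℝ) * Z * NA * NB := by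
    rw [ENNReal.coe_tsum hsumconv]
    exact le_trans (ENNReal.tsum_le_tsum hconvsq) hX
  have hreal : (∑' k : ℤ, ((1 + 2 * |(k:ℝ)|) ^ t) ^ 2 * ‖conv a b k‖ ^ 2) ≤
      κ * hNorm s a ^ 2 * hNorm r b ^ 2 := by
    have h1 := ENNReal.toReal_mono hMtop hle
    rw [ENNReal.coe_toReal] at h1
    rw [tsum_real_eq t (conv a b) hsumconv]
    have h2 : ((3 * c0) ^ (2:ℝ) * Z * NA * NB).toReal = κ * NA.toReal * NB.toReal := by
      rw [ENNReal.toReal_mul, ENNReal.toReal_mul, hκ]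
    have h3 : NA.toReal = hNorm s a ^ 2 := by
      rw [hNAc, ENNReal.coe_toReal, ← tsum_real_eq s a hA, hNorm_sq]
    have h4 : NB.toReal = hNorm r b ^ 2 := by
      rw [hNBc, ENNReal.coe_toReal, ← tsum_real_eq r b hB, hNorm_sq]
    rw [h2, h3, h4] at h1
    exact h1
  have hnorms : 0 ≤ hNorm s a := Real.sqrt_nonneg _
  have hnormr : 0 ≤ hNorm r b := Real.sqrt_nonneg _
  calc hNorm t (conv a b) = Real.sqrt (∑' k : ℤ,
        ((1 + 2 * |(k:ℝ)|) ^ t) ^ 2 * ‖conv a b k‖ ^ 2) := rfl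
    _ ≤ Real.sqrt (κ * hNorm s a ^ 2 * hNorm r b ^ 2) := Real.sqrt_le_sqrt hreal
    _ = Real.sqrt κ * hNorm s a * hNorm r b := by
        rw [Real.sqrt_mul (by positivity), Real.sqrt_mul hκ0, Real.sqrt_sq hnorms,
          Real.sqrt_sq hnormr]
    _ ≤ max (Real.sqrt κ) 1 * hNorm s a * hNorm r b := by
        have := le_max_left (Real.sqrt κ) 1
        gcongr
end

section
/- Let s, r ≥ 0 and t ≤ min(s, r) with s + r − t > 1/2. Then the convolution map is well defined and bounded from h^{−t}(ℤ) × h^{s}(ℤ) to h^{−r}(ℤ): there is a constant C with ‖a∗b‖_{h^{−r}} ≤ C‖a‖_{h^{−t}}‖b‖_{h^{s}} for all a ∈ h^{−t}(ℤ), b ∈ h^{s}(ℤ). -/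
open scoped BigOperators

noncomputable section

/-- The weight `1 + 2|k|`. -/
def clW (k : ℤ) : ℝ := 1 + 2 * |(k : ℝ)|

lemma clW_one_le (k : ℤ) : 1 ≤ clW k := by
  have := abs_nonneg (k : ℝ); unfold clW; linarith

lemma clW_pos (k : ℤ) : 0 < clW k := lt_of_lt_of_le one_pos (clW_one_le k)

lemma clW_rpow_nonneg (k : ℤ) (e : ℝ) : 0 ≤ clW k ^ e := Real.rpow_nonneg (clW_pos k).le e

lemma clW_rpow_pos (k : ℤ) (e : ℝ) : 0 < clW k ^ e := Real.rpow_pos_of_pos (clW_pos k) e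

lemma clW_rpow_le_one (k : ℤ) {e : ℝ} (he : e ≤ 0) : clW k ^ e ≤ 1 :=
  Real.rpow_le_one_of_one_le_of_nonpos (clW_one_le k) he

lemma rpow_anti {x y e : ℝ} (hx : 0 < x) (hxy : x ≤ y) (he : e ≤ 0) : y ^ e ≤ x ^ e := by
  have hy : 0 < y := lt_of_lt_of_le hx hxy
  have h1 : x ^ (-e) ≤ y ^ (-e) := Real.rpow_le_rpow hx.le hxy (by linarith)
  have h2 : y ^ e = (y ^ (-e))⁻¹ := by rw [← Real.rpow_neg hy.le, neg_neg]
  have h3 : x ^ e = (x ^ (-e))⁻¹ := by rw [← Real.rpow_neg hx.le, neg_neg]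
  rw [h2, h3]
  exact inv_anti₀ (Real.rpow_pos_of_pos hx _) h1

lemma clW_rpow_sq (k : ℤ) (e : ℝ) : (clW k ^ (-e)) ^ 2 = clW k ^ (-(2*e)) := by
  rw [sq, ← Real.rpow_add (clW_pos k)]
  congr 1; ring

lemma clW_rpow_mul_rpow (k : ℤ) (e f : ℝ) : clW k ^ e * clW k ^ f = clW k ^ (e + f) :=
  (Real.rpow_add (clW_pos k) e f).symm

lemma clW_sub_le (k j : ℤ) : clW (k - j) ≤ clW k * clW j := by
  have h1 : |((k : ℝ) - (j : ℝ))| ≤ |(k : ℝ)| + |(j : ℝ)| := abs_sub _ _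
  have hk := abs_nonneg (k : ℝ); have hj := abs_nonneg (j : ℝ)
  unfold clW
  push_cast
  nlinarith

lemma clW_cover1 (k j : ℤ) : clW (k - j) ≤ 2 * clW j ∨ clW (k - j) ≤ 2 * clW k := by
  by_contra h
  push_neg at h
  obtain ⟨h1, h2⟩ := h
  have h3 : |((k : ℝ) - (j : ℝ))| ≤ |(k : ℝ)| + |(j : ℝ)| := abs_sub _ _
  unfold clW at h1 h2
  push_cast at h1 h2
  linarith

lemma clW_cover2 (k j : ℤ) : clW k ≤ 2 * clW (k - j) ∨ clW k ≤ 2 * clW j := by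
  by_contra h
  push_neg at h
  obtain ⟨h1, h2⟩ := h
  have h3 : |(k : ℝ)| ≤ |((k : ℝ) - (j : ℝ))| + |(j : ℝ)| := by
    have := abs_add_le ((k : ℝ) - (j : ℝ)) (j : ℝ)
    simpa using this
  unfold clW at h1 h2
  push_cast at h1 h2
  linarith

lemma summable_clW {σ : ℝ} (hσ : 1 < σ) : Summable (fun k : ℤ => clW k ^ (-σ)) := by
  have hb : Summable (fun k : ℤ => |(k : ℝ)| ^ (-σ) + (if k = 0 then (1:ℝ) else 0)) := by
    refine (Real.summable_abs_int_rpow hσ).add (summable_of_ne_finset_zero (s := {0}) ?_)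
    intro k hk
    simp only [Finset.mem_singleton] at hk
    simp [hk]
  apply Summable.of_nonneg_of_le (fun k => clW_rpow_nonneg k _) (fun k => ?_) hb
  by_cases hk : k = 0
  · subst hk
    have h1 : clW 0 ^ (-σ) ≤ 1 := clW_rpow_le_one _ (by linarith)
    have h2 : |((0 : ℤ) : ℝ)| ^ (-σ) = 0 := by
      simp
      exact Real.zero_rpow (by linarith)
    rw [h2]
    norm_num
    linarith
  · have hpos : 0 < |(k : ℝ)| := by
      rw [abs_pos]
      exact_mod_cast hk
    have h1 : |(k : ℝ)| ≤ clW k := by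
      have := abs_nonneg (k : ℝ); unfold clW; linarith
    have := rpow_anti hpos h1 (by linarith : -σ ≤ 0)
    simp only [if_neg hk, add_zero]
    exact this
lemma tsum_cs (u v : ℤ → ℝ) (hu : ∀ i, 0 ≤ u i) (hv : ∀ i, 0 ≤ v i)
    (h2u : Summable fun i => u i ^ 2) (h2v : Summable fun i => v i ^ 2) :
    Summable (fun i => u i * v i) ∧
    (∑' i, u i * v i) ^ 2 ≤ (∑' i, u i ^ 2) * (∑' i, v i ^ 2) := by
  have hmul : Summable fun i => u i * v i := by
    apply Summable.of_nonneg_of_le (fun i => mul_nonneg (hu i) (hv i)) (fun i => ?_)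
      ((h2u.add h2v).mul_left (1/2))
    nlinarith [sq_nonneg (u i - v i)]
  refine ⟨hmul, ?_⟩
  have hP : 0 ≤ ∑' i, u i ^ 2 := tsum_nonneg fun i => sq_nonneg _
  have hQ : 0 ≤ ∑' i, v i ^ 2 := tsum_nonneg fun i => sq_nonneg _
  have key : ∑' i, u i * v i ≤ Real.sqrt (∑' i, u i ^ 2) * Real.sqrt (∑' i, v i ^ 2) := by
    apply Summable.tsum_le_of_sum_le hmul
    intro S
    have h1 : (∑ i ∈ S, u i * v i) ^ 2 ≤ (∑ i ∈ S, u i ^ 2) * ∑ i ∈ S, v i ^ 2 :=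
      Finset.sum_mul_sq_le_sq_mul_sq S u v
    have h2 : ∑ i ∈ S, u i ^ 2 ≤ ∑' i, u i ^ 2 := Summable.sum_le_tsum S (fun i _ => sq_nonneg _) h2u
    have h3 : ∑ i ∈ S, v i ^ 2 ≤ ∑' i, v i ^ 2 := Summable.sum_le_tsum S (fun i _ => sq_nonneg _) h2v
    have h4 : 0 ≤ ∑ i ∈ S, u i * v i := Finset.sum_nonneg fun i _ => mul_nonneg (hu i) (hv i)
    have h5 : 0 ≤ ∑ i ∈ S, u i ^ 2 := Finset.sum_nonneg fun i _ => sq_nonneg _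
    have h6 : 0 ≤ ∑ i ∈ S, v i ^ 2 := Finset.sum_nonneg fun i _ => sq_nonneg _
    have hPQ : (∑ i ∈ S, u i ^ 2) * ∑ i ∈ S, v i ^ 2
        ≤ (∑' i, u i ^ 2) * ∑' i, v i ^ 2 := mul_le_mul h2 h3 h6 hP
    have hy0 : 0 ≤ Real.sqrt (∑' i, u i ^ 2) * Real.sqrt (∑' i, v i ^ 2) :=
      mul_nonneg (Real.sqrt_nonneg _) (Real.sqrt_nonneg _)
    have hy2 : (Real.sqrt (∑' i, u i ^ 2) * Real.sqrt (∑' i, v i ^ 2)) ^ 2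
        = (∑' i, u i ^ 2) * ∑' i, v i ^ 2 := by
      rw [mul_pow, Real.sq_sqrt hP, Real.sq_sqrt hQ]
    calc ∑ i ∈ S, u i * v i = Real.sqrt ((∑ i ∈ S, u i * v i) ^ 2) := (Real.sqrt_sq h4).symm
      _ ≤ Real.sqrt ((Real.sqrt (∑' i, u i ^ 2) * Real.sqrt (∑' i, v i ^ 2)) ^ 2) := by
          apply Real.sqrt_le_sqrt; rw [hy2]; exact le_trans h1 hPQ
      _ = _ := Real.sqrt_sq hy0
  have h0 : 0 ≤ ∑' i, u i * v i := tsum_nonneg fun i => mul_nonneg (hu i) (hv i)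
  have hy2 : (Real.sqrt (∑' i, u i ^ 2) * Real.sqrt (∑' i, v i ^ 2)) ^ 2
      = (∑' i, u i ^ 2) * ∑' i, v i ^ 2 := by
    rw [mul_pow, Real.sq_sqrt hP, Real.sq_sqrt hQ]
  rw [← hy2]
  have hy0 : 0 ≤ Real.sqrt (∑' i, u i ^ 2) * Real.sqrt (∑' i, v i ^ 2) :=
    mul_nonneg (Real.sqrt_nonneg _) (Real.sqrt_nonneg _)
  exact pow_le_pow_left₀ h0 key 2

lemma summable_shift (f : ℤ → ℝ) (m : ℤ) (hf : Summable f) :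
    Summable (fun k : ℤ => f (k - m)) := by
  have h := (Equiv.subRight m).summable_iff.mpr hf
  simpa [Function.comp_def] using h

lemma tsum_shift (f : ℤ → ℝ) (m : ℤ) : ∑' k : ℤ, f (k - m) = ∑' k : ℤ, f k := by
  have h := (Equiv.subRight m).tsum_eq f
  simpa using h

lemma summable_subLeft (f : ℤ → ℝ) (k : ℤ) (hf : Summable f) :
    Summable (fun j : ℤ => f (k - j)) := by
  have h := (Equiv.subLeft k).summable_iff.mpr hf
  simpa [Function.comp_def] using h

lemma tsum_subLeft (f : ℤ → ℝ) (k : ℤ) : ∑' j : ℤ, f (k - j) = ∑' j : ℤ, f j := by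
  have h := (Equiv.subLeft k).tsum_eq f
  simpa using h

lemma sub_bound {p q : ℝ} (hp : 0 ≤ p) (hq : 0 ≤ q) (hpq : 1 < 2*p + 2*q) (m : ℤ) :
    Summable (fun k : ℤ => clW k ^ (-(2*q)) * clW (k - m) ^ (-(2*p))) ∧
    (∑' k : ℤ, clW k ^ (-(2*q)) * clW (k - m) ^ (-(2*p)))
      ≤ 2 * ∑' x : ℤ, clW x ^ (-(2*p + 2*q)) := by
  have hsum1 : Summable (fun k : ℤ => clW k ^ (-(2*p + 2*q))) := summable_clW hpq
  have hsum2 : Summable (fun k : ℤ => clW (k - m) ^ (-(2*p + 2*q))) :=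
    summable_shift (fun x => clW x ^ (-(2*p + 2*q))) m hsum1
  have hpt : ∀ k, clW k ^ (-(2*q)) * clW (k - m) ^ (-(2*p))
      ≤ clW k ^ (-(2*p + 2*q)) + clW (k - m) ^ (-(2*p + 2*q)) := by
    intro k
    rcases le_total (clW k) (clW (k - m)) with h | h
    · have h1 : clW (k - m) ^ (-(2*p)) ≤ clW k ^ (-(2*p)) :=
        rpow_anti (clW_pos k) h (by linarith)
      have h2 : clW k ^ (-(2*q)) * clW k ^ (-(2*p)) = clW k ^ (-(2*p + 2*q)) := by
        rw [clW_rpow_mul_rpow]; congr 1; ring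
      calc clW k ^ (-(2*q)) * clW (k - m) ^ (-(2*p))
          ≤ clW k ^ (-(2*q)) * clW k ^ (-(2*p)) :=
            mul_le_mul_of_nonneg_left h1 (clW_rpow_nonneg _ _)
        _ = clW k ^ (-(2*p + 2*q)) := h2
        _ ≤ _ := le_add_of_nonneg_right (clW_rpow_nonneg _ _)
    · have h1 : clW k ^ (-(2*q)) ≤ clW (k - m) ^ (-(2*q)) :=
        rpow_anti (clW_pos (k - m)) h (by linarith)
      have h2 : clW (k - m) ^ (-(2*q)) * clW (k - m) ^ (-(2*p)) = clW (k - m) ^ (-(2*p + 2*q)) := by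
        rw [clW_rpow_mul_rpow]; congr 1; ring
      calc clW k ^ (-(2*q)) * clW (k - m) ^ (-(2*p))
          ≤ clW (k - m) ^ (-(2*q)) * clW (k - m) ^ (-(2*p)) :=
            mul_le_mul_of_nonneg_right h1 (clW_rpow_nonneg _ _)
        _ = clW (k - m) ^ (-(2*p + 2*q)) := h2
        _ ≤ _ := le_add_of_nonneg_left (clW_rpow_nonneg _ _)
  have hS : Summable (fun k : ℤ => clW k ^ (-(2*q)) * clW (k - m) ^ (-(2*p))) :=
    Summable.of_nonneg_of_le
      (fun k => mul_nonneg (clW_rpow_nonneg _ _) (clW_rpow_nonneg _ _)) hpt (hsum1.add hsum2)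
  refine ⟨hS, ?_⟩
  have hshift : ∑' k : ℤ, clW (k - m) ^ (-(2*p + 2*q)) = ∑' x : ℤ, clW x ^ (-(2*p + 2*q)) :=
    tsum_shift (fun x => clW x ^ (-(2*p + 2*q))) m
  calc ∑' k : ℤ, clW k ^ (-(2*q)) * clW (k - m) ^ (-(2*p))
      ≤ ∑' k : ℤ, (clW k ^ (-(2*p + 2*q)) + clW (k - m) ^ (-(2*p + 2*q))) :=
        Summable.tsum_le_tsum hpt hS (hsum1.add hsum2)
    _ = (∑' k : ℤ, clW k ^ (-(2*p + 2*q))) + ∑' k : ℤ, clW (k - m) ^ (-(2*p + 2*q)) :=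
        Summable.tsum_add hsum1 hsum2
    _ = 2 * ∑' x : ℤ, clW x ^ (-(2*p + 2*q)) := by rw [hshift]; ring
lemma key1 {p q : ℝ} (hp : 0 ≤ p) (hq : 0 ≤ q) (hpq : 1 < 2*p + 2*q)
    (α β : ℤ → ℝ) (hα0 : ∀ m, 0 ≤ α m) (hβ0 : ∀ m, 0 ≤ β m)
    (hα : Summable fun m => α m ^ 2) (hβ : Summable fun m => β m ^ 2) :
    Summable (fun k : ℤ => (clW k ^ (-q) * ∑' j : ℤ, clW j ^ (-p) * (α (k - j) * β j)) ^ 2) ∧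
    ∑' k : ℤ, (clW k ^ (-q) * ∑' j : ℤ, clW j ^ (-p) * (α (k - j) * β j)) ^ 2
      ≤ (2 * ∑' x : ℤ, clW x ^ (-(2*p + 2*q))) * ((∑' m, α m ^ 2) * (∑' m, β m ^ 2)) := by
  have hB2 : 0 ≤ ∑' m, β m ^ 2 := tsum_nonneg fun m => sq_nonneg _
  have hA2 : 0 ≤ ∑' m, α m ^ 2 := tsum_nonneg fun m => sq_nonneg _
  have hCσ : 0 ≤ ∑' x : ℤ, clW x ^ (-(2*p + 2*q)) := tsum_nonneg fun x => clW_rpow_nonneg _ _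
  -- summability of shifted α²
  have hαk : ∀ k : ℤ, Summable fun j => α (k - j) ^ 2 :=
    fun k => summable_subLeft (fun m => α m ^ 2) k hα
  -- squared-u summability
  have hu2 : ∀ k : ℤ, Summable fun j => (clW j ^ (-p) * α (k - j)) ^ 2 := by
    intro k
    apply Summable.of_nonneg_of_le (fun j => sq_nonneg _) (fun j => ?_) (hαk k)
    rw [mul_pow]
    have h1 : (clW j ^ (-p)) ^ 2 ≤ 1 := by
      have := clW_rpow_le_one j (neg_nonpos.mpr hp)
      nlinarith [clW_rpow_nonneg j (-p)]
    nlinarith [sq_nonneg (α (k - j))]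
  -- the inner CS
  have hcs : ∀ k : ℤ, Summable (fun j => clW j ^ (-p) * (α (k - j) * β j)) ∧
      (∑' j : ℤ, clW j ^ (-p) * (α (k - j) * β j)) ^ 2
        ≤ (∑' j : ℤ, (clW j ^ (-p) * α (k - j)) ^ 2) * ∑' j, β j ^ 2 := by
    intro k
    have h := tsum_cs (fun j => clW j ^ (-p) * α (k - j)) β
      (fun j => mul_nonneg (clW_rpow_nonneg _ _) (hα0 _)) hβ0 (hu2 k) hβ
    constructor
    · exact h.1.congr (fun j => by ring)
    · have heq : ∑' j : ℤ, clW j ^ (-p) * (α (k - j) * β j)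
          = ∑' j : ℤ, (fun j => clW j ^ (-p) * α (k - j)) j * β j :=
        tsum_congr (fun j => by ring)
      rw [heq]
      exact h.2
  -- rewrite inner squared sums
  have husq : ∀ k : ℤ, ∑' j : ℤ, (clW j ^ (-p) * α (k - j)) ^ 2
      = ∑' j : ℤ, clW j ^ (-(2*p)) * α (k - j) ^ 2 :=
    fun k => tsum_congr (fun j => by rw [mul_pow, clW_rpow_sq])
  -- define T
  set T : ℤ → ℝ := fun k => clW k ^ (-(2*q)) * ∑' j : ℤ, clW j ^ (-(2*p)) * α (k - j) ^ 2
    with hTdef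
  have hTin : ∀ k : ℤ, Summable fun j => clW j ^ (-(2*p)) * α (k - j) ^ 2 := by
    intro k
    apply Summable.of_nonneg_of_le
      (fun j => mul_nonneg (clW_rpow_nonneg _ _) (sq_nonneg _)) (fun j => ?_) (hαk k)
    have h1 := clW_rpow_le_one j (by linarith : -(2*p) ≤ 0)
    nlinarith [sq_nonneg (α (k - j)), clW_rpow_nonneg j (-(2*p))]
  have hT0 : ∀ k, 0 ≤ T k := fun k =>
    mul_nonneg (clW_rpow_nonneg _ _)
      (tsum_nonneg fun j => mul_nonneg (clW_rpow_nonneg _ _) (sq_nonneg _))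
  -- T k as a tsum over m
  have hTm : ∀ k : ℤ, T k = ∑' m : ℤ, clW k ^ (-(2*q)) * (clW (k - m) ^ (-(2*p)) * α m ^ 2) := by
    intro k
    rw [hTdef]
    simp only
    have h := (Equiv.subLeft k).tsum_eq (fun j => clW j ^ (-(2*p)) * α (k - j) ^ 2)
    simp only [Equiv.subLeft_apply, sub_sub_cancel] at h
    rw [← h, tsum_mul_left]
  have hTmsum : ∀ k : ℤ, Summable fun m : ℤ => clW k ^ (-(2*q)) * (clW (k - m) ^ (-(2*p)) * α m ^ 2) := by
    intro k
    apply Summable.of_nonneg_of_le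
      (fun m => mul_nonneg (clW_rpow_nonneg _ _)
        (mul_nonneg (clW_rpow_nonneg _ _) (sq_nonneg _)))
      (fun m => ?_) hα
    have h1 := clW_rpow_le_one k (by linarith : -(2*q) ≤ 0)
    have h2 := clW_rpow_le_one (k - m) (by linarith : -(2*p) ≤ 0)
    have h3 := clW_rpow_nonneg k (-(2*q))
    have h4 := clW_rpow_nonneg (k - m) (-(2*p))
    have h5 : clW k ^ (-(2*q)) * clW (k - m) ^ (-(2*p)) ≤ 1 := by nlinarith
    nlinarith [sq_nonneg (α m), mul_nonneg h3 h4]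
  -- finset bound for T
  have hTfin : ∀ S : Finset ℤ, ∑ k ∈ S, T k
      ≤ (2 * ∑' x : ℤ, clW x ^ (-(2*p + 2*q))) * ∑' m, α m ^ 2 := by
    intro S
    have h1 : ∑ k ∈ S, T k = ∑' m : ℤ, ∑ k ∈ S,
        clW k ^ (-(2*q)) * (clW (k - m) ^ (-(2*p)) * α m ^ 2) := by
      rw [Finset.sum_congr rfl (fun k _ => hTm k)]
      exact Summable.tsum_finsetSum (fun k _ => hTmsum k) |>.symm
    rw [h1]
    have h2 : ∀ m : ℤ, ∑ k ∈ S, clW k ^ (-(2*q)) * (clW (k - m) ^ (-(2*p)) * α m ^ 2)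
        ≤ (2 * ∑' x : ℤ, clW x ^ (-(2*p + 2*q))) * α m ^ 2 := by
      intro m
      have h3 : ∑ k ∈ S, clW k ^ (-(2*q)) * (clW (k - m) ^ (-(2*p)) * α m ^ 2)
          = (∑ k ∈ S, clW k ^ (-(2*q)) * clW (k - m) ^ (-(2*p))) * α m ^ 2 := by
        rw [Finset.sum_mul]
        exact Finset.sum_congr rfl (fun k _ => by ring)
      rw [h3]
      apply mul_le_mul_of_nonneg_right _ (sq_nonneg _)
      calc ∑ k ∈ S, clW k ^ (-(2*q)) * clW (k - m) ^ (-(2*p))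
          ≤ ∑' k : ℤ, clW k ^ (-(2*q)) * clW (k - m) ^ (-(2*p)) :=
            Summable.sum_le_tsum S (fun k _ => mul_nonneg (clW_rpow_nonneg _ _) (clW_rpow_nonneg _ _))
              (sub_bound hp hq hpq m).1
        _ ≤ 2 * ∑' x : ℤ, clW x ^ (-(2*p + 2*q)) := (sub_bound hp hq hpq m).2
    calc ∑' m : ℤ, ∑ k ∈ S, clW k ^ (-(2*q)) * (clW (k - m) ^ (-(2*p)) * α m ^ 2)
        ≤ ∑' m : ℤ, (2 * ∑' x : ℤ, clW x ^ (-(2*p + 2*q))) * α m ^ 2 := by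
          apply Summable.tsum_le_tsum h2 (summable_sum (fun k _ => hTmsum k))
            (hα.mul_left _)
      _ = (2 * ∑' x : ℤ, clW x ^ (-(2*p + 2*q))) * ∑' m, α m ^ 2 := tsum_mul_left
  have hTsummable : Summable T := summable_of_sum_le hT0 hTfin
  have hTtsum : ∑' k, T k ≤ (2 * ∑' x : ℤ, clW x ^ (-(2*p + 2*q))) * ∑' m, α m ^ 2 :=
    Summable.tsum_le_of_sum_le hTsummable hTfin
  -- pointwise: G k ^ 2 ≤ T k * B2
  have hGT : ∀ k : ℤ, (clW k ^ (-q) * ∑' j : ℤ, clW j ^ (-p) * (α (k - j) * β j)) ^ 2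
      ≤ T k * ∑' m, β m ^ 2 := by
    intro k
    rw [mul_pow, clW_rpow_sq]
    have h1 := (hcs k).2
    rw [husq k] at h1
    calc clW k ^ (-(2*q)) * (∑' j : ℤ, clW j ^ (-p) * (α (k - j) * β j)) ^ 2
        ≤ clW k ^ (-(2*q)) * ((∑' j : ℤ, clW j ^ (-(2*p)) * α (k - j) ^ 2) * ∑' j, β j ^ 2) :=
          mul_le_mul_of_nonneg_left h1 (clW_rpow_nonneg _ _)
      _ = T k * ∑' m, β m ^ 2 := by rw [hTdef]; ring
  constructor
  · apply Summable.of_nonneg_of_le (fun k => sq_nonneg _) hGT (hTsummable.mul_right _)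
  · calc ∑' k : ℤ, (clW k ^ (-q) * ∑' j : ℤ, clW j ^ (-p) * (α (k - j) * β j)) ^ 2
        ≤ ∑' k : ℤ, T k * ∑' m, β m ^ 2 :=
          Summable.tsum_le_tsum hGT
            (Summable.of_nonneg_of_le (fun k => sq_nonneg _) hGT (hTsummable.mul_right _))
            (hTsummable.mul_right _)
      _ = (∑' k, T k) * ∑' m, β m ^ 2 := tsum_mul_right
      _ ≤ ((2 * ∑' x : ℤ, clW x ^ (-(2*p + 2*q))) * ∑' m, α m ^ 2) * ∑' m, β m ^ 2 :=
          mul_le_mul_of_nonneg_right hTtsum hB2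
      _ = (2 * ∑' x : ℤ, clW x ^ (-(2*p + 2*q))) * ((∑' m, α m ^ 2) * (∑' m, β m ^ 2)) := by
          ring
end

open scoped BigOperators

set_option maxHeartbeats 2000000 in
/-- The Convolution Lemma, part (b): `h^{-t}(ℤ) × h^{s}(ℤ) → h^{-r}(ℤ)`. -/
theorem convolution_lemma_b (s r t : ℝ) (hs : 0 ≤ s) (hr : 0 ≤ r)
    (ht : t ≤ min s r) (hsrt : 1 / 2 < s + r - t) :
    ∃ C : ℝ, 0 < C ∧ ∀ a b : ℤ → ℂ, memH (-t) a → memH s b →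
      (∀ k : ℤ, Summable fun j : ℤ => ‖a (k - j) * b j‖) ∧
      memH (-r) (conv a b) ∧
      hNorm (-r) (conv a b) ≤ C * hNorm (-t) a * hNorm s b := by
  have hts : t ≤ s := le_trans ht (min_le_left _ _)
  have htr : t ≤ r := le_trans ht (min_le_right _ _)
  set Cσ : ℝ := ∑' x : ℤ, clW x ^ (-(2*(s + r - t))) with hCσdef
  have hCσ0 : 0 ≤ Cσ := tsum_nonneg fun x => clW_rpow_nonneg _ _
  set D : ℝ := (2:ℝ) ^ |t| + (2:ℝ) ^ s with hDdef
  have h2abs : (0:ℝ) < (2:ℝ) ^ |t| := Real.rpow_pos_of_pos (by norm_num) _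
  have h2s : (0:ℝ) < (2:ℝ) ^ s := Real.rpow_pos_of_pos (by norm_num) _
  have hD0 : 0 < D := by rw [hDdef]; linarith
  refine ⟨D * Real.sqrt (8 * Cσ + 1), mul_pos hD0 (Real.sqrt_pos.mpr (by linarith)), ?_⟩
  intro a b ha hb
  set α : ℤ → ℝ := fun m => clW m ^ (-t) * ‖a m‖ with hαdef
  set β : ℤ → ℝ := fun m => clW m ^ s * ‖b m‖ with hβdef
  have hα0 : ∀ m, 0 ≤ α m := fun m => mul_nonneg (clW_rpow_nonneg _ _) (norm_nonneg _)
  have hβ0 : ∀ m, 0 ≤ β m := fun m => mul_nonneg (clW_rpow_nonneg _ _) (norm_nonneg _)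
  have hα2 : Summable fun m => α m ^ 2 :=
    Summable.congr ha (fun m => (mul_pow _ _ 2).symm)
  have hβ2 : Summable fun m => β m ^ 2 :=
    Summable.congr hb (fun m => (mul_pow _ _ 2).symm)
  set A2 : ℝ := ∑' m : ℤ, α m ^ 2 with hA2def
  set B2 : ℝ := ∑' m : ℤ, β m ^ 2 with hB2def
  have hA20 : 0 ≤ A2 := tsum_nonneg fun m => sq_nonneg _
  have hB20 : 0 ≤ B2 := tsum_nonneg fun m => sq_nonneg _
  have habsa : ∀ m, ‖a m‖ = clW m ^ t * α m := by
    intro m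
    rw [hαdef]
    simp only
    rw [← mul_assoc, clW_rpow_mul_rpow, show t + -t = 0 by ring, Real.rpow_zero, one_mul]
  have habsb : ∀ m, ‖b m‖ = clW m ^ (-s) * β m := by
    intro m
    rw [hβdef]
    simp only
    rw [← mul_assoc, clW_rpow_mul_rpow, show -s + s = 0 by ring, Real.rpow_zero, one_mul]
  have hsummand : ∀ k j : ℤ, ‖a (k - j) * b j‖
      = clW (k - j) ^ t * clW j ^ (-s) * (α (k - j) * β j) := by
    intro k j
    rw [norm_mul, habsa, habsb]
    ring
  have hαk : ∀ k : ℤ, Summable fun j => α (k - j) ^ 2 :=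
    fun k => summable_subLeft (fun m => α m ^ 2) k hα2
  have hweight : ∀ k j : ℤ, clW (k - j) ^ t * clW j ^ (-s) ≤ clW k ^ |t| := by
    intro k j
    rcases le_or_gt 0 t with h0 | h0
    · have h1 : clW (k - j) ^ t ≤ (clW k * clW j) ^ t :=
        Real.rpow_le_rpow (clW_pos _).le (clW_sub_le k j) h0
      rw [Real.mul_rpow (clW_pos k).le (clW_pos j).le] at h1
      have h2 : clW j ^ t * clW j ^ (-s) ≤ 1 := by
        rw [clW_rpow_mul_rpow]; exact clW_rpow_le_one _ (by linarith)
      have h3 : clW k ^ t ≤ clW k ^ |t| :=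
        Real.rpow_le_rpow_of_exponent_le (clW_one_le k) (le_abs_self t)
      calc clW (k - j) ^ t * clW j ^ (-s) ≤ clW k ^ t * clW j ^ t * clW j ^ (-s) :=
            mul_le_mul_of_nonneg_right h1 (clW_rpow_nonneg _ _)
        _ = clW k ^ t * (clW j ^ t * clW j ^ (-s)) := by ring
        _ ≤ clW k ^ t * 1 := mul_le_mul_of_nonneg_left h2 (clW_rpow_nonneg _ _)
        _ = clW k ^ t := mul_one _
        _ ≤ clW k ^ |t| := h3
    · have h1 : clW (k - j) ^ t ≤ 1 := clW_rpow_le_one _ h0.le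
      have h2 : clW j ^ (-s) ≤ 1 := clW_rpow_le_one _ (by linarith)
      have h3 : (1:ℝ) ≤ clW k ^ |t| := by
        have := Real.rpow_le_rpow_of_exponent_le (clW_one_le k) (abs_nonneg t)
        rwa [Real.rpow_zero] at this
      nlinarith [clW_rpow_nonneg (k - j) t, clW_rpow_nonneg j (-s)]
  have part1 : ∀ k : ℤ, Summable fun j => ‖a (k - j) * b j‖ := by
    intro k
    apply Summable.of_nonneg_of_le (fun j => norm_nonneg _) (fun j => ?_)
      (((hαk k).add hβ2).mul_left (clW k ^ |t| * (1/2)))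
    rw [hsummand]
    have h1 : α (k - j) * β j ≤ 1/2 * (α (k - j) ^ 2 + β j ^ 2) := by
      nlinarith [sq_nonneg (α (k - j) - β j)]
    have h2 : 0 ≤ α (k - j) * β j := mul_nonneg (hα0 _) (hβ0 _)
    calc clW (k - j) ^ t * clW j ^ (-s) * (α (k - j) * β j)
        ≤ clW k ^ |t| * (α (k - j) * β j) := mul_le_mul_of_nonneg_right (hweight k j) h2
      _ ≤ clW k ^ |t| * (1/2 * (α (k - j) ^ 2 + β j ^ 2)) :=
          mul_le_mul_of_nonneg_left h1 (clW_rpow_nonneg _ _)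
      _ = clW k ^ |t| * (1/2) * (α (k - j) ^ 2 + β j ^ 2) := by ring
  have hinner : ∀ e : ℝ, e ≤ 0 → ∀ k : ℤ,
      Summable (fun j => clW j ^ e * (α (k - j) * β j)) := by
    intro e he k
    apply Summable.of_nonneg_of_le
      (fun j => mul_nonneg (clW_rpow_nonneg _ _) (mul_nonneg (hα0 _) (hβ0 _)))
      (fun j => ?_) (((hαk k).add hβ2).mul_left (1/2))
    have h1 := clW_rpow_le_one j he
    have h2 : α (k - j) * β j ≤ 1/2 * (α (k - j) ^ 2 + β j ^ 2) := by
      nlinarith [sq_nonneg (α (k - j) - β j)]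
    have h3 : 0 ≤ α (k - j) * β j := mul_nonneg (hα0 _) (hβ0 _)
    have h4 := clW_rpow_nonneg j e
    nlinarith
  have hinner2 : ∀ e : ℝ, e ≤ 0 → ∀ k : ℤ,
      Summable (fun j => clW (k - j) ^ e * (α (k - j) * β j)) := by
    intro e he k
    apply Summable.of_nonneg_of_le
      (fun j => mul_nonneg (clW_rpow_nonneg _ _) (mul_nonneg (hα0 _) (hβ0 _)))
      (fun j => ?_) (((hαk k).add hβ2).mul_left (1/2))
    have h1 := clW_rpow_le_one (k - j) he
    have h2 : α (k - j) * β j ≤ 1/2 * (α (k - j) ^ 2 + β j ^ 2) := by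
      nlinarith [sq_nonneg (α (k - j) - β j)]
    have h3 : 0 ≤ α (k - j) * β j := mul_nonneg (hα0 _) (hβ0 _)
    have h4 := clW_rpow_nonneg (k - j) e
    nlinarith
  have main : ∃ G₁ G₂ : ℤ → ℝ, (∀ k, 0 ≤ G₁ k) ∧ (∀ k, 0 ≤ G₂ k)
      ∧ Summable (fun k => G₁ k ^ 2) ∧ Summable (fun k => G₂ k ^ 2)
      ∧ (∑' k : ℤ, G₁ k ^ 2) ≤ 2 * Cσ * (A2 * B2) ∧ (∑' k : ℤ, G₂ k ^ 2) ≤ 2 * Cσ * (A2 * B2)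
      ∧ ∀ k : ℤ, clW k ^ (-r) * (∑' j : ℤ, ‖a (k - j) * b j‖)
          ≤ D * (G₁ k + G₂ k) := by
    rcases le_or_gt 0 t with h0t | h0t
    · -- case 0 ≤ t
      have hp1 : (0:ℝ) ≤ s - t := by linarith
      have hpq1 : (1:ℝ) < 2*(s - t) + 2*r := by linarith
      have hpq2 : (1:ℝ) < 2*s + 2*(r - t) := by linarith
      have hkey1 := key1 hp1 hr hpq1 α β hα0 hβ0 hα2 hβ2
      have hkey2 := key1 hs (by linarith : (0:ℝ) ≤ r - t) hpq2 α β hα0 hβ0 hα2 hβ2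
      have hre1 : (∑' x : ℤ, clW x ^ (-(2*(s - t) + 2*r))) = Cσ := by
        rw [hCσdef]; exact tsum_congr (fun x => by congr 1; ring)
      have hre2 : (∑' x : ℤ, clW x ^ (-(2*s + 2*(r - t)))) = Cσ := by
        rw [hCσdef]; exact tsum_congr (fun x => by congr 1; ring)
      rw [hre1] at hkey1
      rw [hre2] at hkey2
      refine ⟨fun k => clW k ^ (-r) * ∑' j : ℤ, clW j ^ (-(s - t)) * (α (k - j) * β j),
              fun k => clW k ^ (-(r - t)) * ∑' j : ℤ, clW j ^ (-s) * (α (k - j) * β j),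
              ?_, ?_, hkey1.1, hkey2.1, hkey1.2, hkey2.2, ?_⟩
      · exact fun k => mul_nonneg (clW_rpow_nonneg _ _) (tsum_nonneg fun j =>
          mul_nonneg (clW_rpow_nonneg _ _) (mul_nonneg (hα0 _) (hβ0 _)))
      · exact fun k => mul_nonneg (clW_rpow_nonneg _ _) (tsum_nonneg fun j =>
          mul_nonneg (clW_rpow_nonneg _ _) (mul_nonneg (hα0 _) (hβ0 _)))
      intro k
      have hker : ∀ j : ℤ, clW k ^ (-r) * (clW (k - j) ^ t * clW j ^ (-s))
          ≤ D * (clW k ^ (-r) * clW j ^ (-(s - t)) + clW k ^ (-(r - t)) * clW j ^ (-s)) := by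
        intro j
        have h2t : (2:ℝ) ^ t ≤ D := by
          rw [hDdef, abs_of_nonneg h0t]; linarith
        have htrm1 : 0 ≤ clW k ^ (-r) * clW j ^ (-(s - t)) :=
          mul_nonneg (clW_rpow_nonneg _ _) (clW_rpow_nonneg _ _)
        have htrm2 : 0 ≤ clW k ^ (-(r - t)) * clW j ^ (-s) :=
          mul_nonneg (clW_rpow_nonneg _ _) (clW_rpow_nonneg _ _)
        rcases clW_cover1 k j with hc | hc
        · have h1 : clW (k - j) ^ t ≤ (2:ℝ) ^ t * clW j ^ t := by
            have h := Real.rpow_le_rpow (clW_pos _).le hc h0t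
            rwa [Real.mul_rpow (by norm_num) (clW_pos j).le] at h
          have h2 : clW j ^ t * clW j ^ (-s) = clW j ^ (-(s - t)) := by
            rw [clW_rpow_mul_rpow]; congr 1; ring
          have h3 : clW (k - j) ^ t * clW j ^ (-s) ≤ (2:ℝ) ^ t * clW j ^ (-(s - t)) := by
            calc clW (k - j) ^ t * clW j ^ (-s) ≤ ((2:ℝ) ^ t * clW j ^ t) * clW j ^ (-s) :=
                  mul_le_mul_of_nonneg_right h1 (clW_rpow_nonneg _ _)
              _ = (2:ℝ) ^ t * (clW j ^ t * clW j ^ (-s)) := by ring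
              _ = (2:ℝ) ^ t * clW j ^ (-(s - t)) := by rw [h2]
          calc clW k ^ (-r) * (clW (k - j) ^ t * clW j ^ (-s))
              ≤ clW k ^ (-r) * ((2:ℝ) ^ t * clW j ^ (-(s - t))) :=
                mul_le_mul_of_nonneg_left h3 (clW_rpow_nonneg _ _)
            _ = (2:ℝ) ^ t * (clW k ^ (-r) * clW j ^ (-(s - t))) := by ring
            _ ≤ D * (clW k ^ (-r) * clW j ^ (-(s - t))) :=
                mul_le_mul_of_nonneg_right h2t htrm1
            _ ≤ D * (clW k ^ (-r) * clW j ^ (-(s - t)) + clW k ^ (-(r - t)) * clW j ^ (-s)) :=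
                mul_le_mul_of_nonneg_left (le_add_of_nonneg_right htrm2) hD0.le
        · have h1 : clW (k - j) ^ t ≤ (2:ℝ) ^ t * clW k ^ t := by
            have h := Real.rpow_le_rpow (clW_pos _).le hc h0t
            rwa [Real.mul_rpow (by norm_num) (clW_pos k).le] at h
          have h2 : clW k ^ (-r) * clW k ^ t = clW k ^ (-(r - t)) := by
            rw [clW_rpow_mul_rpow]; congr 1; ring
          calc clW k ^ (-r) * (clW (k - j) ^ t * clW j ^ (-s))
              ≤ clW k ^ (-r) * (((2:ℝ) ^ t * clW k ^ t) * clW j ^ (-s)) := by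
                apply mul_le_mul_of_nonneg_left _ (clW_rpow_nonneg _ _)
                exact mul_le_mul_of_nonneg_right h1 (clW_rpow_nonneg _ _)
            _ = (2:ℝ) ^ t * ((clW k ^ (-r) * clW k ^ t) * clW j ^ (-s)) := by ring
            _ = (2:ℝ) ^ t * (clW k ^ (-(r - t)) * clW j ^ (-s)) := by rw [h2]
            _ ≤ D * (clW k ^ (-(r - t)) * clW j ^ (-s)) :=
                mul_le_mul_of_nonneg_right h2t htrm2
            _ ≤ D * (clW k ^ (-r) * clW j ^ (-(s - t)) + clW k ^ (-(r - t)) * clW j ^ (-s)) := by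
                apply mul_le_mul_of_nonneg_left (le_add_of_nonneg_left htrm1) hD0.le
      have hL : clW k ^ (-r) * (∑' j : ℤ, ‖a (k - j) * b j‖)
          = ∑' j : ℤ, clW k ^ (-r) * ‖a (k - j) * b j‖ := tsum_mul_left.symm
      rw [hL]
      have hS1 := hinner (-(s - t)) (by linarith) k
      have hS2 := hinner (-s) (by linarith) k
      have hRsum : Summable (fun j : ℤ =>
          D * (clW k ^ (-r) * (clW j ^ (-(s - t)) * (α (k - j) * β j))
             + clW k ^ (-(r - t)) * (clW j ^ (-s) * (α (k - j) * β j)))) :=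
        (((hS1.mul_left _).add (hS2.mul_left _)).mul_left D)
      calc ∑' j : ℤ, clW k ^ (-r) * ‖a (k - j) * b j‖
          ≤ ∑' j : ℤ, D * (clW k ^ (-r) * (clW j ^ (-(s - t)) * (α (k - j) * β j))
             + clW k ^ (-(r - t)) * (clW j ^ (-s) * (α (k - j) * β j))) := by
            apply Summable.tsum_le_tsum _ ((part1 k).mul_left _) hRsum
            intro j
            rw [hsummand]
            have hX : 0 ≤ α (k - j) * β j := mul_nonneg (hα0 _) (hβ0 _)
            calc clW k ^ (-r) * (clW (k - j) ^ t * clW j ^ (-s) * (α (k - j) * β j))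
                = (clW k ^ (-r) * (clW (k - j) ^ t * clW j ^ (-s))) * (α (k - j) * β j) := by
                  ring
              _ ≤ (D * (clW k ^ (-r) * clW j ^ (-(s - t)) + clW k ^ (-(r - t)) * clW j ^ (-s)))
                    * (α (k - j) * β j) := mul_le_mul_of_nonneg_right (hker j) hX
              _ = D * (clW k ^ (-r) * (clW j ^ (-(s - t)) * (α (k - j) * β j))
                    + clW k ^ (-(r - t)) * (clW j ^ (-s) * (α (k - j) * β j))) := by ring
        _ = D * ((clW k ^ (-r) * ∑' j : ℤ, clW j ^ (-(s - t)) * (α (k - j) * β j))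
              + clW k ^ (-(r - t)) * ∑' j : ℤ, clW j ^ (-s) * (α (k - j) * β j)) := by
            rw [tsum_mul_left, Summable.tsum_add (hS1.mul_left _) (hS2.mul_left _),
              tsum_mul_left, tsum_mul_left]
    · -- case t < 0
      have hp2 : (0:ℝ) ≤ -t := by linarith
      have hpq1 : (1:ℝ) < 2*s + 2*(r - t) := by linarith
      have hpq2 : (1:ℝ) < 2*(-t) + 2*(s + r) := by linarith
      have hkey1 := key1 hs (by linarith : (0:ℝ) ≤ r - t) hpq1 α β hα0 hβ0 hα2 hβ2
      have hkey2 := key1 hp2 (by linarith : (0:ℝ) ≤ s + r) hpq2 β α hβ0 hα0 hβ2 hα2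
      have hre1 : (∑' x : ℤ, clW x ^ (-(2*s + 2*(r - t)))) = Cσ := by
        rw [hCσdef]; exact tsum_congr (fun x => by congr 1; ring)
      have hre2 : (∑' x : ℤ, clW x ^ (-(2*(-t) + 2*(s + r)))) = Cσ := by
        rw [hCσdef]; exact tsum_congr (fun x => by congr 1; ring)
      rw [hre1] at hkey1
      rw [hre2] at hkey2
      -- reindex the second kernel form
      have hswap : ∀ k : ℤ, (∑' j : ℤ, clW (k - j) ^ t * (α (k - j) * β j))
          = ∑' j : ℤ, clW j ^ (-(-t)) * (β (k - j) * α j) := by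
        intro k
        have h := (Equiv.subLeft k).tsum_eq (fun j => clW j ^ (-(-t)) * (β (k - j) * α j))
        simp only [Equiv.subLeft_apply, sub_sub_cancel] at h
        rw [← h]
        exact tsum_congr (fun m => by rw [neg_neg]; ring)
      refine ⟨fun k => clW k ^ (-(r - t)) * ∑' j : ℤ, clW j ^ (-s) * (α (k - j) * β j),
              fun k => clW k ^ (-(s + r)) * ∑' j : ℤ, clW (k - j) ^ t * (α (k - j) * β j),
              ?_, ?_, hkey1.1, ?_, hkey1.2, ?_, ?_⟩
      · exact fun k => mul_nonneg (clW_rpow_nonneg _ _) (tsum_nonneg fun j =>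
          mul_nonneg (clW_rpow_nonneg _ _) (mul_nonneg (hα0 _) (hβ0 _)))
      · exact fun k => mul_nonneg (clW_rpow_nonneg _ _) (tsum_nonneg fun j =>
          mul_nonneg (clW_rpow_nonneg _ _) (mul_nonneg (hα0 _) (hβ0 _)))
      · exact hkey2.1.congr (fun k => by rw [← hswap k])
      · calc ∑' k : ℤ, (clW k ^ (-(s + r)) * ∑' j : ℤ, clW (k - j) ^ t * (α (k - j) * β j)) ^ 2
            = ∑' k : ℤ, (clW k ^ (-(s + r)) * ∑' j : ℤ, clW j ^ (-(-t)) * (β (k - j) * α j)) ^ 2 :=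
              tsum_congr (fun k => by rw [hswap k])
          _ ≤ 2 * Cσ * (B2 * A2) := hkey2.2
          _ = 2 * Cσ * (A2 * B2) := by ring
      intro k
      have hker : ∀ j : ℤ, clW k ^ (-r) * (clW (k - j) ^ t * clW j ^ (-s))
          ≤ D * (clW k ^ (-(r - t)) * clW j ^ (-s) + clW k ^ (-(s + r)) * clW (k - j) ^ t) := by
        intro j
        have h2t : (2:ℝ) ^ (-t) ≤ D := by
          rw [hDdef, abs_of_neg h0t]; linarith
        have h2s' : (2:ℝ) ^ s ≤ D := by rw [hDdef]; linarith
        have htrm1 : 0 ≤ clW k ^ (-(r - t)) * clW j ^ (-s) :=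
          mul_nonneg (clW_rpow_nonneg _ _) (clW_rpow_nonneg _ _)
        have htrm2 : 0 ≤ clW k ^ (-(s + r)) * clW (k - j) ^ t :=
          mul_nonneg (clW_rpow_nonneg _ _) (clW_rpow_nonneg _ _)
        rcases clW_cover2 k j with hc | hc
        · -- clW k ≤ 2 * clW (k - j)
          have hhalf : clW k / 2 ≤ clW (k - j) := by linarith
          have h1 : clW (k - j) ^ t ≤ (clW k / 2) ^ t :=
            rpow_anti (by linarith [clW_pos k]) hhalf h0t.le
          have h2 : (clW k / 2) ^ t = (2:ℝ) ^ (-t) * clW k ^ t := by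
            rw [Real.div_rpow (clW_pos k).le (by norm_num : (0:ℝ) ≤ 2),
              Real.rpow_neg (by norm_num : (0:ℝ) ≤ 2)]
            ring
          have h3 : clW k ^ (-r) * clW k ^ t = clW k ^ (-(r - t)) := by
            rw [clW_rpow_mul_rpow]; congr 1; ring
          calc clW k ^ (-r) * (clW (k - j) ^ t * clW j ^ (-s))
              ≤ clW k ^ (-r) * (((2:ℝ) ^ (-t) * clW k ^ t) * clW j ^ (-s)) := by
                apply mul_le_mul_of_nonneg_left _ (clW_rpow_nonneg _ _)
                apply mul_le_mul_of_nonneg_right _ (clW_rpow_nonneg _ _)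
                rw [← h2]; exact h1
            _ = (2:ℝ) ^ (-t) * ((clW k ^ (-r) * clW k ^ t) * clW j ^ (-s)) := by ring
            _ = (2:ℝ) ^ (-t) * (clW k ^ (-(r - t)) * clW j ^ (-s)) := by rw [h3]
            _ ≤ D * (clW k ^ (-(r - t)) * clW j ^ (-s)) :=
                mul_le_mul_of_nonneg_right h2t htrm1
            _ ≤ D * (clW k ^ (-(r - t)) * clW j ^ (-s) + clW k ^ (-(s + r)) * clW (k - j) ^ t) :=
                mul_le_mul_of_nonneg_left (le_add_of_nonneg_right htrm2) hD0.le
        · -- clW k ≤ 2 * clW j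
          have hhalf : clW k / 2 ≤ clW j := by linarith
          have h1 : clW j ^ (-s) ≤ (clW k / 2) ^ (-s) :=
            rpow_anti (by linarith [clW_pos k]) hhalf (by linarith)
          have h2 : (clW k / 2) ^ (-s) = (2:ℝ) ^ s * clW k ^ (-s) := by
            have hne1 : ((2:ℝ) ^ s) ≠ 0 := ne_of_gt h2s
            have hne2 : clW k ^ s ≠ 0 := ne_of_gt (clW_rpow_pos k s)
            rw [Real.div_rpow (clW_pos k).le (by norm_num : (0:ℝ) ≤ 2),
              Real.rpow_neg (clW_pos k).le, Real.rpow_neg (by norm_num : (0:ℝ) ≤ 2)]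
            field_simp
          have h3 : clW k ^ (-r) * clW k ^ (-s) = clW k ^ (-(s + r)) := by
            rw [clW_rpow_mul_rpow]; congr 1; ring
          calc clW k ^ (-r) * (clW (k - j) ^ t * clW j ^ (-s))
              ≤ clW k ^ (-r) * (clW (k - j) ^ t * ((2:ℝ) ^ s * clW k ^ (-s))) := by
                apply mul_le_mul_of_nonneg_left _ (clW_rpow_nonneg _ _)
                apply mul_le_mul_of_nonneg_left _ (clW_rpow_nonneg _ _)
                rw [← h2]; exact h1
            _ = (2:ℝ) ^ s * ((clW k ^ (-r) * clW k ^ (-s)) * clW (k - j) ^ t) := by ring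
            _ = (2:ℝ) ^ s * (clW k ^ (-(s + r)) * clW (k - j) ^ t) := by rw [h3]
            _ ≤ D * (clW k ^ (-(s + r)) * clW (k - j) ^ t) :=
                mul_le_mul_of_nonneg_right h2s' htrm2
            _ ≤ D * (clW k ^ (-(r - t)) * clW j ^ (-s) + clW k ^ (-(s + r)) * clW (k - j) ^ t) :=
                mul_le_mul_of_nonneg_left (le_add_of_nonneg_left htrm1) hD0.le
      have hL : clW k ^ (-r) * (∑' j : ℤ, ‖a (k - j) * b j‖)
          = ∑' j : ℤ, clW k ^ (-r) * ‖a (k - j) * b j‖ := tsum_mul_left.symm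
      rw [hL]
      have hS1 := hinner (-s) (by linarith) k
      have hS2 := hinner2 t h0t.le k
      have hRsum : Summable (fun j : ℤ =>
          D * (clW k ^ (-(r - t)) * (clW j ^ (-s) * (α (k - j) * β j))
             + clW k ^ (-(s + r)) * (clW (k - j) ^ t * (α (k - j) * β j)))) :=
        (((hS1.mul_left _).add (hS2.mul_left _)).mul_left D)
      calc ∑' j : ℤ, clW k ^ (-r) * ‖a (k - j) * b j‖
          ≤ ∑' j : ℤ, D * (clW k ^ (-(r - t)) * (clW j ^ (-s) * (α (k - j) * β j))
             + clW k ^ (-(s + r)) * (clW (k - j) ^ t * (α (k - j) * β j))) := by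
            apply Summable.tsum_le_tsum _ ((part1 k).mul_left _) hRsum
            intro j
            rw [hsummand]
            have hX : 0 ≤ α (k - j) * β j := mul_nonneg (hα0 _) (hβ0 _)
            calc clW k ^ (-r) * (clW (k - j) ^ t * clW j ^ (-s) * (α (k - j) * β j))
                = (clW k ^ (-r) * (clW (k - j) ^ t * clW j ^ (-s))) * (α (k - j) * β j) := by
                  ring
              _ ≤ (D * (clW k ^ (-(r - t)) * clW j ^ (-s) + clW k ^ (-(s + r)) * clW (k - j) ^ t))
                    * (α (k - j) * β j) := mul_le_mul_of_nonneg_right (hker j) hX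
              _ = D * (clW k ^ (-(r - t)) * (clW j ^ (-s) * (α (k - j) * β j))
                    + clW k ^ (-(s + r)) * (clW (k - j) ^ t * (α (k - j) * β j))) := by ring
        _ = D * ((clW k ^ (-(r - t)) * ∑' j : ℤ, clW j ^ (-s) * (α (k - j) * β j))
              + clW k ^ (-(s + r)) * ∑' j : ℤ, clW (k - j) ^ t * (α (k - j) * β j)) := by
            rw [tsum_mul_left, Summable.tsum_add (hS1.mul_left _) (hS2.mul_left _),
              tsum_mul_left, tsum_mul_left]
  obtain ⟨G₁, G₂, hG10, hG20, hG1s, hG2s, hG1b, hG2b, hptw⟩ := main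
  have hconv_le : ∀ k : ℤ, ‖conv a b k‖ ≤ ∑' j : ℤ, ‖a (k - j) * b j‖ := by
    intro k
    have hs' : Summable fun j : ℤ => ‖a (k - j) * b j‖ :=
      (part1 k).congr (fun j => rfl)
    calc ‖conv a b k‖ = ‖∑' j : ℤ, a (k - j) * b j‖ := by
          rfl
      _ ≤ ∑' j : ℤ, ‖a (k - j) * b j‖ := norm_tsum_le_tsum_norm hs'
      _ = ∑' j : ℤ, ‖a (k - j) * b j‖ :=
          tsum_congr (fun j => rfl)
  have hH : ∀ k, clW k ^ (-r) * ‖conv a b k‖ ≤ D * (G₁ k + G₂ k) := fun k =>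
    le_trans (mul_le_mul_of_nonneg_left (hconv_le k) (clW_rpow_nonneg _ _)) (hptw k)
  have hH0 : ∀ k, 0 ≤ clW k ^ (-r) * ‖conv a b k‖ := fun k =>
    mul_nonneg (clW_rpow_nonneg _ _) (norm_nonneg _)
  have hdom : ∀ k, (clW k ^ (-r) * ‖conv a b k‖) ^ 2
      ≤ 2 * D ^ 2 * (G₁ k ^ 2 + G₂ k ^ 2) := by
    intro k
    have h1 : (clW k ^ (-r) * ‖conv a b k‖) ^ 2 ≤ (D * (G₁ k + G₂ k)) ^ 2 :=
      pow_le_pow_left₀ (hH0 k) (hH k) 2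
    have h3 : (G₁ k + G₂ k) ^ 2 ≤ 2 * (G₁ k ^ 2 + G₂ k ^ 2) := by
      nlinarith [sq_nonneg (G₁ k - G₂ k)]
    calc (clW k ^ (-r) * ‖conv a b k‖) ^ 2
        ≤ (D * (G₁ k + G₂ k)) ^ 2 := h1
      _ = D ^ 2 * (G₁ k + G₂ k) ^ 2 := mul_pow _ _ 2
      _ ≤ D ^ 2 * (2 * (G₁ k ^ 2 + G₂ k ^ 2)) :=
          mul_le_mul_of_nonneg_left h3 (sq_nonneg D)
      _ = 2 * D ^ 2 * (G₁ k ^ 2 + G₂ k ^ 2) := by ring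
  have hsqeq : ∀ k : ℤ, ((1 + 2*|(k:ℝ)|) ^ (-r)) ^ 2 * ‖conv a b k‖ ^ 2
      = (clW k ^ (-r) * ‖conv a b k‖) ^ 2 := fun k => (mul_pow _ _ 2).symm
  have hsummL : Summable (fun k : ℤ =>
      ((1 + 2*|(k:ℝ)|) ^ (-r)) ^ 2 * ‖conv a b k‖ ^ 2) := by
    apply Summable.of_nonneg_of_le
      (fun k => mul_nonneg (sq_nonneg _) (sq_nonneg _)) (fun k => ?_)
      ((hG1s.add hG2s).mul_left (2 * D ^ 2))
    rw [hsqeq k]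
    exact hdom k
  have hmem : memH (-r) (conv a b) := hsummL
  refine ⟨part1, hmem, ?_⟩
  have hsum_le : ∑' k : ℤ, ((1 + 2*|(k:ℝ)|) ^ (-r)) ^ 2 * ‖conv a b k‖ ^ 2
      ≤ D ^ 2 * (8 * Cσ + 1) * (A2 * B2) := by
    have hA2B2 : 0 ≤ A2 * B2 := mul_nonneg hA20 hB20
    calc ∑' k : ℤ, ((1 + 2*|(k:ℝ)|) ^ (-r)) ^ 2 * ‖conv a b k‖ ^ 2
        ≤ ∑' k : ℤ, 2 * D ^ 2 * (G₁ k ^ 2 + G₂ k ^ 2) := by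
          apply Summable.tsum_le_tsum (fun k => by rw [hsqeq k]; exact hdom k) hsummL
            ((hG1s.add hG2s).mul_left _)
      _ = 2 * D ^ 2 * ((∑' k : ℤ, G₁ k ^ 2) + ∑' k : ℤ, G₂ k ^ 2) := by
          rw [tsum_mul_left, Summable.tsum_add hG1s hG2s]
      _ ≤ 2 * D ^ 2 * (2 * Cσ * (A2 * B2) + 2 * Cσ * (A2 * B2)) := by
          apply mul_le_mul_of_nonneg_left (add_le_add hG1b hG2b) (by positivity)
      _ = 8 * Cσ * (D ^ 2 * (A2 * B2)) := by ring
      _ ≤ (8 * Cσ + 1) * (D ^ 2 * (A2 * B2)) := by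
          apply mul_le_mul_of_nonneg_right (by linarith) (by positivity)
      _ = D ^ 2 * (8 * Cσ + 1) * (A2 * B2) := by ring
  have hNa : hNorm (-t) a = Real.sqrt A2 := by
    unfold hNorm
    rw [hA2def]
    congr 1
    exact tsum_congr (fun m => (mul_pow _ _ 2).symm)
  have hNb : hNorm s b = Real.sqrt B2 := by
    unfold hNorm
    rw [hB2def]
    congr 1
    exact tsum_congr (fun m => (mul_pow _ _ 2).symm)
  rw [hNa, hNb]
  have hgoal2 : (D * Real.sqrt (8 * Cσ + 1) * Real.sqrt A2 * Real.sqrt B2) ^ 2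
      = D ^ 2 * (8 * Cσ + 1) * (A2 * B2) := by
    rw [mul_pow, mul_pow, mul_pow, Real.sq_sqrt (by linarith : (0:ℝ) ≤ 8 * Cσ + 1),
      Real.sq_sqrt hA20, Real.sq_sqrt hB20]
    ring
  unfold hNorm
  calc Real.sqrt (∑' k : ℤ, ((1 + 2*|(k:ℝ)|) ^ (-r)) ^ 2 * ‖conv a b k‖ ^ 2)
      ≤ Real.sqrt ((D * Real.sqrt (8 * Cσ + 1) * Real.sqrt A2 * Real.sqrt B2) ^ 2) := by
        apply Real.sqrt_le_sqrt
        rw [hgoal2]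
        exact hsum_le
    _ = D * Real.sqrt (8 * Cσ + 1) * Real.sqrt A2 * Real.sqrt B2 := Real.sqrt_sq (by positivity)
end

section
/- If s + r − t < 1/2 (with s, r ≥ 0, t ≤ min(s,r)), then the convolution does not map h^s(ℤ) × h^r(ℤ) into h^t(ℤ); i.e., there exist a ∈ h^s(ℤ) and b ∈ h^r(ℤ) such that either a∗b is not well defined (the defining series fails to converge absolutely at some k) or a∗b ∉ h^t(ℤ). -/
open scoped BigOperators

/-- The counterexample sequence: `k ^ (-A)` for `k ≥ 1`, zero otherwise. -/
noncomputable def seq (A : ℝ) : ℤ → ℂ :=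
  fun k => if 1 ≤ k then (((k : ℝ) ^ (-A) : ℝ) : ℂ) else 0

lemma rpow_sq {x : ℝ} (hx : 0 ≤ x) (y : ℝ) : (x ^ y) ^ 2 = x ^ (y * 2) := by
  rw [Real.rpow_mul hx, Real.rpow_two]

lemma seq_abs (A : ℝ) (k : ℤ) (hk : 1 ≤ k) :
    ‖seq A k‖ = (k : ℝ) ^ (-A) := by
  have h0 : (0:ℝ) ≤ (k:ℝ) := by exact_mod_cast (by omega : (0:ℤ) ≤ k)
  simp [seq, hk, Complex.norm_real, Real.norm_eq_abs, abs_of_nonneg (Real.rpow_nonneg h0 _)]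

lemma seq_zero (A : ℝ) (k : ℤ) (hk : k < 1) : seq A k = 0 := by
  simp [seq, not_le.mpr hk]

lemma memH_seq {σ A : ℝ} (hσ : 0 ≤ σ) (hA : σ * 2 - A * 2 < -1) : memH σ (seq A) := by
  rw [memH, summable_int_iff_summable_nat_and_neg]
  constructor
  · apply Summable.of_nonneg_of_le (f := fun n : ℕ =>
      (3:ℝ) ^ (σ * 2) * (n : ℝ) ^ (σ * 2 - A * 2))
      (fun n => by positivity)
    · intro n
      rcases Nat.eq_zero_or_pos n with rfl | hn
      · simp [seq_zero A 0 (by norm_num)]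
        rw [Real.zero_rpow (by linarith : σ * 2 - A * 2 ≠ 0)]
        positivity
      · have h1 : (1:ℤ) ≤ (n:ℤ) := by exact_mod_cast hn
        have h1r : (1:ℝ) ≤ (n:ℝ) := by exact_mod_cast hn
        have hn0 : (0:ℝ) < (n:ℝ) := by linarith
        rw [seq_abs A n h1]
        push_cast
        rw [abs_of_nonneg hn0.le, rpow_sq (by linarith : (0:ℝ) ≤ 1 + 2 * n), rpow_sq hn0.le]
        have hb : (1 + 2 * (n:ℝ)) ^ (σ * 2) ≤ (3 * n) ^ (σ * 2) :=
          Real.rpow_le_rpow (by linarith) (by linarith) (by linarith)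
        have h3 : ((3:ℝ) * n) ^ (σ * 2) = 3 ^ (σ * 2) * (n:ℝ) ^ (σ * 2) :=
          Real.mul_rpow (by norm_num) hn0.le
        calc (1 + 2 * (n:ℝ)) ^ (σ * 2) * (n:ℝ) ^ (-A * 2)
            ≤ 3 ^ (σ * 2) * (n:ℝ) ^ (σ * 2) * (n:ℝ) ^ (-A * 2) := by
              rw [← h3]
              exact mul_le_mul_of_nonneg_right hb (Real.rpow_nonneg hn0.le _)
          _ = 3 ^ (σ * 2) * (n:ℝ) ^ (σ * 2 - A * 2) := by
              rw [mul_assoc, ← Real.rpow_add hn0]; ring_nf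
    · exact (Real.summable_nat_rpow.mpr hA).mul_left _
  · apply Summable.congr summable_zero
    intro n
    have : seq A (-(n:ℤ)) = 0 := seq_zero A _ (by omega)
    simp [this]

lemma conv_seq_eq (A B : ℝ) (k : ℤ) :
    conv (seq A) (seq B) k =
      ((∑ j ∈ Finset.Icc (1:ℤ) (k-1),
        (((k - j : ℤ) : ℝ) ^ (-A) * ((j : ℤ) : ℝ) ^ (-B)) : ℝ) : ℂ) := by
  rw [conv, tsum_eq_sum (s := Finset.Icc (1:ℤ) (k-1)) ?_]
  · rw [Complex.ofReal_sum]
    refine Finset.sum_congr rfl fun j hj => ?_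
    obtain ⟨hj1, hj2⟩ := Finset.mem_Icc.mp hj
    have hkj : (1:ℤ) ≤ k - j := by omega
    simp only [seq, if_pos hj1, if_pos hkj, Complex.ofReal_mul]
  · intro j hj
    simp only [Finset.mem_Icc, not_and_or, not_le] at hj
    rcases hj with h | h
    · rw [seq_zero B j h, mul_zero]
    · rw [seq_zero A (k - j) (by omega), zero_mul]

lemma conv_seq_lb {A B : ℝ} (hA : 0 ≤ A) (hB : 0 ≤ B) (k : ℤ) (hk : 2 ≤ k) :
    ((k:ℝ) - 1) * ((k:ℝ) ^ (-A) * (k:ℝ) ^ (-B)) ≤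
      ‖conv (seq A) (seq B) k‖ := by
  have hk0 : (0:ℝ) < (k:ℝ) := by exact_mod_cast (by omega : (0:ℤ) < k)
  rw [conv_seq_eq A B k, Complex.norm_real, Real.norm_eq_abs]
  have hterm : ∀ j ∈ Finset.Icc (1:ℤ) (k-1),
      (k:ℝ) ^ (-A) * (k:ℝ) ^ (-B) ≤ ((k - j : ℤ) : ℝ) ^ (-A) * ((j : ℤ) : ℝ) ^ (-B) := by
    intro j hj
    obtain ⟨hj1, hj2⟩ := Finset.mem_Icc.mp hj
    have h1 : (0:ℝ) < ((k - j : ℤ) : ℝ) := by exact_mod_cast (by omega : (0:ℤ) < k - j)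
    have h2 : ((k - j : ℤ) : ℝ) ≤ (k:ℝ) := by exact_mod_cast (by omega : k - j ≤ k)
    have h3 : (0:ℝ) < ((j : ℤ) : ℝ) := by exact_mod_cast (by omega : (0:ℤ) < j)
    have h4 : ((j : ℤ) : ℝ) ≤ (k:ℝ) := by exact_mod_cast (by omega : j ≤ k)
    exact mul_le_mul (Real.rpow_le_rpow_of_nonpos h1 h2 (by linarith))
      (Real.rpow_le_rpow_of_nonpos h3 h4 (by linarith))
      (Real.rpow_nonneg hk0.le _) (Real.rpow_nonneg h1.le _)
  have hsum := Finset.card_nsmul_le_sum (Finset.Icc (1:ℤ) (k-1)) _ _ hterm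
  have hcard : (((Finset.Icc (1:ℤ) (k-1)).card : ℝ)) = (k:ℝ) - 1 := by
    rw [Int.card_Icc]
    have : (k - 1 + 1 - 1).toNat = (k - 1).toNat := by ring_nf
    rw [this]
    have h : ((k-1).toNat : ℤ) = k - 1 := Int.toNat_of_nonneg (by omega)
    push_cast [h]
    push_cast
    rw [show (((k-1).toNat : ℕ) : ℝ) = (((k-1).toNat : ℤ) : ℝ) by push_cast; ring, h]
    push_cast; ring
  rw [nsmul_eq_mul, hcard] at hsum
  refine le_trans hsum (le_abs_self _)

/-- Failure of the Convolution Lemma when `s + r - t < 1/2`. -/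
theorem convolution_lemma_fails (s r t : ℝ) (hs : 0 ≤ s) (hr : 0 ≤ r)
    (ht : t ≤ min s r) (hsrt : s + r - t < 1 / 2) :
    ∃ a b : ℤ → ℂ, memH s a ∧ memH r b ∧
      ((∃ k : ℤ, ¬ Summable fun j : ℤ => ‖a (k - j) * b j‖) ∨
        ¬ memH t (conv a b)) := by
  set ε : ℝ := (1/2 - (s + r - t)) / 4 with hεdef
  have hε : 0 < ε := by simp only [hεdef]; linarith
  set A : ℝ := s + 1/2 + ε with hAdef
  set B : ℝ := r + 1/2 + ε with hBdef
  have hA0 : 0 ≤ A := by simp only [hAdef]; linarith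
  have hB0 : 0 ≤ B := by simp only [hBdef]; linarith
  refine ⟨seq A, seq B, memH_seq hs (by simp only [hAdef]; linarith),
    memH_seq hr (by simp only [hBdef]; linarith), Or.inr ?_⟩
  intro hmem
  rw [memH] at hmem
  have hnat := (summable_int_iff_summable_nat_and_neg.mp hmem).1
  set θ : ℝ := t * 2 - A * 2 - B * 2 + 2 with hθdef
  have hθ : -1 < θ := by
    simp only [hθdef, hAdef, hBdef]; linarith
  set c : ℝ := min 1 ((3:ℝ) ^ (t * 2)) with hcdef
  have hc : 0 < c := lt_min one_pos (Real.rpow_pos_of_pos (by norm_num) _)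
  -- lower bound the summand for n ≥ 2
  have key : ∀ n : ℕ, 2 ≤ n →
      c / 4 * (n:ℝ) ^ θ ≤
        ((1 + 2 * |((n:ℤ):ℝ)|) ^ t) ^ 2 * ‖conv (seq A) (seq B) (n:ℤ)‖ ^ 2 := by
    intro n hn
    have hnr : (2:ℝ) ≤ (n:ℝ) := by exact_mod_cast hn
    have hn0 : (0:ℝ) < (n:ℝ) := by linarith
    have habs : |((n:ℤ):ℝ)| = (n:ℝ) := by push_cast; exact abs_of_nonneg hn0.le
    have hcb := conv_seq_lb hA0 hB0 (n:ℤ) (by exact_mod_cast hn)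
    push_cast at hcb
    have hrA := Real.rpow_nonneg hn0.le (-A)
    have hrB := Real.rpow_nonneg hn0.le (-B)
    have hcbnn : (0:ℝ) ≤ ((n:ℝ) - 1) * ((n:ℝ) ^ (-A) * (n:ℝ) ^ (-B)) :=
      mul_nonneg (by linarith) (mul_nonneg hrA hrB)
    -- weight lower bound
    have hw : c * (n:ℝ) ^ (t * 2) ≤ (1 + 2 * (n:ℝ)) ^ (t * 2) := by
      rcases le_or_gt 0 t with hT | hT
      · calc c * (n:ℝ) ^ (t * 2) ≤ 1 * (n:ℝ) ^ (t * 2) :=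
              mul_le_mul_of_nonneg_right (min_le_left _ _) (Real.rpow_nonneg hn0.le _)
          _ = (n:ℝ) ^ (t * 2) := one_mul _
          _ ≤ (1 + 2 * (n:ℝ)) ^ (t * 2) :=
              Real.rpow_le_rpow hn0.le (by linarith) (by linarith)
      · have h1 : (1 + 2 * (n:ℝ)) ≤ 3 * n := by linarith
        have h2 : ((3:ℝ) * n) ^ (t * 2) ≤ (1 + 2 * (n:ℝ)) ^ (t * 2) :=
          Real.rpow_le_rpow_of_nonpos (by linarith) h1 (by linarith)
        have h3 : ((3:ℝ) * n) ^ (t * 2) = 3 ^ (t * 2) * (n:ℝ) ^ (t * 2) :=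
          Real.mul_rpow (by norm_num) hn0.le
        calc c * (n:ℝ) ^ (t * 2) ≤ 3 ^ (t * 2) * (n:ℝ) ^ (t * 2) :=
              mul_le_mul_of_nonneg_right (min_le_right _ _) (Real.rpow_nonneg hn0.le _)
          _ = ((3:ℝ) * n) ^ (t * 2) := h3.symm
          _ ≤ _ := h2
    -- combine
    have hsq : (((n:ℝ) - 1) * ((n:ℝ) ^ (-A) * (n:ℝ) ^ (-B))) ^ 2 ≤
        ‖conv (seq A) (seq B) (n:ℤ)‖ ^ 2 :=
      pow_le_pow_left₀ hcbnn hcb 2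
    have hwsq : ((1 + 2 * |((n:ℤ):ℝ)|) ^ t) ^ 2 = (1 + 2 * (n:ℝ)) ^ (t * 2) := by
      rw [habs, rpow_sq (by linarith)]
    rw [hwsq]
    have hmain : c / 4 * (n:ℝ) ^ θ ≤
        (1 + 2 * (n:ℝ)) ^ (t * 2) * (((n:ℝ) - 1) * ((n:ℝ) ^ (-A) * (n:ℝ) ^ (-B))) ^ 2 := by
      have e1 : (((n:ℝ) - 1) * ((n:ℝ) ^ (-A) * (n:ℝ) ^ (-B))) ^ 2 =
          ((n:ℝ) - 1) ^ 2 * ((n:ℝ) ^ (-A * 2) * (n:ℝ) ^ (-B * 2)) := by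
        rw [mul_pow, mul_pow, rpow_sq hn0.le, rpow_sq hn0.le]
      have e2 : ((n:ℝ) / 2) ^ 2 ≤ ((n:ℝ) - 1) ^ 2 := by nlinarith
      have e3 : (n:ℝ) ^ θ = (n:ℝ) ^ (2:ℕ) * ((n:ℝ) ^ (t*2) * ((n:ℝ) ^ (-A * 2) * (n:ℝ) ^ (-B * 2))) := by
        rw [← Real.rpow_natCast (n:ℝ) 2, ← Real.rpow_add hn0, ← Real.rpow_add hn0,
          ← Real.rpow_add hn0]
        congr 1
        simp only [hθdef]; push_cast; ring
      have hA2 : (0:ℝ) ≤ (n:ℝ) ^ (-A * 2) * (n:ℝ) ^ (-B * 2) :=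
        mul_nonneg (Real.rpow_nonneg hn0.le _) (Real.rpow_nonneg hn0.le _)
      calc c / 4 * (n:ℝ) ^ θ
          = c * (n:ℝ) ^ (t*2) * (((n:ℝ)/2) ^ 2 * ((n:ℝ) ^ (-A * 2) * (n:ℝ) ^ (-B * 2))) := by
            rw [e3]; push_cast; ring
        _ ≤ (1 + 2 * (n:ℝ)) ^ (t * 2) * (((n:ℝ) - 1) ^ 2 * ((n:ℝ) ^ (-A * 2) * (n:ℝ) ^ (-B * 2))) := by
            apply mul_le_mul hw
            · exact mul_le_mul_of_nonneg_right e2 hA2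
            · positivity
            · positivity
        _ = _ := by rw [e1]
    refine le_trans hmain (mul_le_mul_of_nonneg_left hsq ?_)
    positivity
  -- derive contradiction
  have hg : Summable fun n : ℕ => (if 2 ≤ n then c / 4 * (n:ℝ) ^ θ else 0) := by
    apply Summable.of_nonneg_of_le (f := fun n : ℕ =>
      ((1 + 2 * |((n:ℤ):ℝ)|) ^ t) ^ 2 * ‖conv (seq A) (seq B) (n:ℤ)‖ ^ 2)
      (fun n => by positivity) _ hnat
    intro n
    by_cases hn : 2 ≤ n
    · rw [if_pos hn]; exact key n hn
    · rw [if_neg hn]; positivity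
  have hg2 : Summable fun n : ℕ => c / 4 * ((n:ℝ) + 2) ^ θ := by
    have := (summable_nat_add_iff 2).mpr hg
    refine this.congr fun n => ?_
    rw [if_pos (by omega : 2 ≤ n + 2)]
    push_cast; ring_nf
  have hg3 : Summable fun n : ℕ => ((n:ℝ) + 2) ^ θ := by
    have hne : c / 4 ≠ 0 := by positivity
    exact (summable_mul_left_iff hne).mp hg2
  have hg4 : Summable fun n : ℕ => (n:ℝ) ^ θ := by
    refine (summable_nat_add_iff 2).mp (hg3.congr fun n => ?_)
    push_cast; ring_nf
  have := Real.summable_nat_rpow.mp hg4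
  linarith
end

section
/- Let s ≥ 0 and define the weight ω(k) = k^s·log(1+k) if k is even and ω(k) = k^s if k is odd. Then ω satisfies k^s ≤ ω(k) ≤ C·k^{s+1} for all k ∈ ℕ (indeed ω has logarithmic order s: log ω(k)/log k → s), but ω is not equivalent to any monotone weight; i.e., there is no nondecreasing function μ : ℕ → (0,∞) and constants c, C > 0 with c·μ(k) ≤ ω(k) ≤ C·μ(k) for all k ∈ ℕ. -/
open scoped BigOperators
open Real Filter

/-- The weight `ω(k) = k^s log(1+k)` for even `k`, `ω(k) = k^s` for odd `k`. -/
noncomputable def oddEvenWeight (s : ℝ) (k : ℕ) : ℝ :=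
  if Even k then (k : ℝ) ^ s * Real.log (1 + (k : ℝ)) else (k : ℝ) ^ s

/-- The weight of Example 1: it has logarithmic order `s` and satisfies
`k^s ≤ ω(k) ≤ C k^{s+1}`, but it is not equivalent to any monotone weight. -/
theorem weight_not_equivalent_to_monotone (s : ℝ) (hs : 0 ≤ s) :
    (∃ C : ℝ, 0 < C ∧ ∀ k : ℕ, 1 ≤ k →
      (k : ℝ) ^ s ≤ oddEvenWeight s k ∧ oddEvenWeight s k ≤ C * (k : ℝ) ^ (s + 1)) ∧
    Filter.Tendsto (fun k : ℕ => Real.log (oddEvenWeight s k) / Real.log (k : ℝ))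
      Filter.atTop (nhds s) ∧
    ¬ ∃ μ : ℕ → ℝ, (∀ k, 0 < μ k) ∧ Monotone μ ∧
        ∃ c C : ℝ, 0 < c ∧ 0 < C ∧ ∀ k : ℕ, 1 ≤ k →
          c * μ k ≤ oddEvenWeight s k ∧ oddEvenWeight s k ≤ C * μ k := by
  have hexp3 : Real.exp 1 ≤ 3 := by
    have := Real.exp_one_lt_d9
    linarith
  have hlog1 : ∀ x : ℝ, 3 ≤ x → 1 ≤ Real.log x := by
    intro x hx
    calc (1:ℝ) = Real.log (Real.exp 1) := (Real.log_exp 1).symm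
      _ ≤ Real.log x := Real.log_le_log (Real.exp_pos 1) (hexp3.trans hx)
  refine ⟨?_, ?_, ?_⟩
  · -- Part 1
    refine ⟨1, one_pos, fun k hk => ?_⟩
    have hk0 : (0:ℝ) < (k:ℝ) := by exact_mod_cast hk
    have hk1 : (1:ℝ) ≤ (k:ℝ) := by exact_mod_cast hk
    have hrpos : (0:ℝ) < (k:ℝ) ^ s := Real.rpow_pos_of_pos hk0 s
    have hsplit : (k:ℝ) ^ (s+1) = (k:ℝ) ^ s * (k:ℝ) := Real.rpow_add_one hk0.ne' s
    constructor
    · unfold oddEvenWeight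
      split_ifs with h
      · -- even k, k ≥ 1 ⟹ k ≥ 2
        have hk2 : 2 ≤ k := by
          rcases h with ⟨m, hm⟩
          omega
        have : 1 ≤ Real.log (1 + (k:ℝ)) := by
          apply hlog1
          have : (2:ℝ) ≤ (k:ℝ) := by exact_mod_cast hk2
          linarith
        nlinarith
      · exact le_rfl
    · unfold oddEvenWeight
      rw [one_mul, hsplit]
      split_ifs with h
      · have hlogle : Real.log (1 + (k:ℝ)) ≤ (k:ℝ) := by
          have := Real.log_le_sub_one_of_pos (x := 1 + (k:ℝ)) (by linarith)
          linarith
        nlinarith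
      · nlinarith
  · -- Part 2
    have h_log_atTop : Tendsto (fun k : ℕ => Real.log (k:ℝ)) atTop atTop :=
      Real.tendsto_log_atTop.comp tendsto_natCast_atTop_atTop
    have h1 : Tendsto (fun k : ℕ => Real.log (Real.log (k:ℝ)) / Real.log (k:ℝ)) atTop (nhds 0) :=
      (Real.isLittleO_log_id_atTop.tendsto_div_nhds_zero).comp h_log_atTop
    have h2 : Tendsto (fun k : ℕ => Real.log 2 / Real.log (k:ℝ)) atTop (nhds 0) :=
      tendsto_const_nhds.div_atTop h_log_atTop
    have hu : Tendsto (fun k : ℕ => s + (Real.log 2 + Real.log (Real.log (k:ℝ))) / Real.log (k:ℝ))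
        atTop (nhds s) := by
      have h3 : Tendsto (fun k : ℕ => s + (Real.log 2 / Real.log (k:ℝ) + Real.log (Real.log (k:ℝ)) / Real.log (k:ℝ))) atTop (nhds (s + (0 + 0))) :=
        (tendsto_const_nhds : Tendsto (fun _ : ℕ => s) atTop (nhds s)).add (h2.add h1)
      simpa [add_div] using h3
    apply tendsto_of_tendsto_of_tendsto_of_le_of_le' (tendsto_const_nhds) hu
    · -- lower bound eventually
      filter_upwards [eventually_ge_atTop 3] with k hk
      have hk0 : (0:ℝ) < (k:ℝ) := by positivity
      have hk3 : (3:ℝ) ≤ (k:ℝ) := by exact_mod_cast hk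
      have hlogk : 1 ≤ Real.log (k:ℝ) := hlog1 _ hk3
      have hlogk0 : 0 < Real.log (k:ℝ) := by linarith
      unfold oddEvenWeight
      split_ifs with h
      · have hL1 : 1 ≤ Real.log (1 + (k:ℝ)) := hlog1 _ (by linarith)
        have := Real.log_mul (Real.rpow_pos_of_pos hk0 s).ne' (by linarith : Real.log (1 + (k:ℝ)) ≠ 0)
        rw [this, Real.log_rpow hk0, add_div, mul_div_cancel_right₀ _ hlogk0.ne']
        have : 0 ≤ Real.log (Real.log (1 + (k:ℝ))) / Real.log (k:ℝ) :=
          div_nonneg (Real.log_nonneg hL1) hlogk0.le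
        linarith
      · rw [Real.log_rpow hk0, mul_div_cancel_right₀ _ hlogk0.ne']
    · -- upper bound eventually
      filter_upwards [eventually_ge_atTop 3] with k hk
      have hk0 : (0:ℝ) < (k:ℝ) := by positivity
      have hk3 : (3:ℝ) ≤ (k:ℝ) := by exact_mod_cast hk
      have hlogk : 1 ≤ Real.log (k:ℝ) := hlog1 _ hk3
      have hlogk0 : 0 < Real.log (k:ℝ) := by linarith
      have hnonneg : 0 ≤ (Real.log 2 + Real.log (Real.log (k:ℝ))) / Real.log (k:ℝ) := by
        apply div_nonneg _ hlogk0.le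
        have : (0:ℝ) ≤ Real.log 2 := Real.log_nonneg (by norm_num)
        have := Real.log_nonneg hlogk
        linarith
      unfold oddEvenWeight
      split_ifs with h
      · have hL1 : 1 ≤ Real.log (1 + (k:ℝ)) := hlog1 _ (by linarith)
        have := Real.log_mul (Real.rpow_pos_of_pos hk0 s).ne' (by linarith : Real.log (1 + (k:ℝ)) ≠ 0)
        rw [this, Real.log_rpow hk0, add_div, mul_div_cancel_right₀ _ hlogk0.ne']
        have hle : Real.log (1 + (k:ℝ)) ≤ 2 * Real.log (k:ℝ) := by
          have hsq : 1 + (k:ℝ) ≤ (k:ℝ)^2 := by nlinarith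
          calc Real.log (1 + (k:ℝ)) ≤ Real.log ((k:ℝ)^2) := Real.log_le_log (by linarith) hsq
            _ = 2 * Real.log (k:ℝ) := by rw [Real.log_pow]; push_cast; ring
        have hLL : Real.log (Real.log (1 + (k:ℝ))) ≤ Real.log 2 + Real.log (Real.log (k:ℝ)) := by
          calc Real.log (Real.log (1 + (k:ℝ))) ≤ Real.log (2 * Real.log (k:ℝ)) :=
              Real.log_le_log (by linarith) hle
            _ = Real.log 2 + Real.log (Real.log (k:ℝ)) :=
              Real.log_mul (by norm_num) hlogk0.ne'
        have hdiv : Real.log (Real.log (1 + (k:ℝ))) / Real.log (k:ℝ) ≤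
            (Real.log 2 + Real.log (Real.log (k:ℝ))) / Real.log (k:ℝ) := by gcongr
        linarith
      · rw [Real.log_rpow hk0, mul_div_cancel_right₀ _ hlogk0.ne']
        linarith
  · -- Part 3
    rintro ⟨μ, hμpos, hμmono, c, C, hc, hC, hbound⟩
    set K := C / c * 2 ^ s with hK
    -- key inequality for even k ≥ 2
    have key : ∀ k : ℕ, 2 ≤ k → Even k → Real.log (1 + (k:ℝ)) ≤ K := by
      intro k hk2 hkeven
      have hk0 : (0:ℝ) < (k:ℝ) := by positivity
      have hω1 : oddEvenWeight s k = (k:ℝ) ^ s * Real.log (1 + (k:ℝ)) := by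
        simp [oddEvenWeight, hkeven]
      have hodd : ¬ Even (k+1) := by simp [Nat.even_add_one, hkeven]
      have hω2 : oddEvenWeight s (k+1) = ((k:ℝ)+1) ^ s := by
        simp only [oddEvenWeight, if_neg hodd]
        norm_cast
      have h1 := (hbound k (by omega)).2
      have h2 := (hbound (k+1) (by omega)).1
      have hmono := hμmono (Nat.le_succ k)
      have hstep : oddEvenWeight s k ≤ C / c * oddEvenWeight s (k+1) := by
        have : c * μ (k+1) ≤ oddEvenWeight s (k+1) := h2
        have hμle : μ (k+1) ≤ oddEvenWeight s (k+1) / c := by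
          rw [le_div_iff₀ hc]; linarith
        calc oddEvenWeight s k ≤ C * μ k := h1
          _ ≤ C * μ (k+1) := by nlinarith
          _ ≤ C * (oddEvenWeight s (k+1) / c) := by nlinarith
          _ = C / c * oddEvenWeight s (k+1) := by ring
      rw [hω1, hω2] at hstep
      have hpow : ((k:ℝ)+1) ^ s ≤ 2 ^ s * (k:ℝ) ^ s := by
        have h2k : (k:ℝ) + 1 ≤ 2 * (k:ℝ) := by
          have : (2:ℝ) ≤ (k:ℝ) := by exact_mod_cast hk2
          linarith
        calc ((k:ℝ)+1) ^ s ≤ (2 * (k:ℝ)) ^ s := Real.rpow_le_rpow (by linarith) h2k hs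
          _ = 2 ^ s * (k:ℝ) ^ s := Real.mul_rpow (by norm_num) hk0.le
      have hrpos : (0:ℝ) < (k:ℝ) ^ s := Real.rpow_pos_of_pos hk0 s
      have hCc : 0 < C / c := div_pos hC hc
      have : (k:ℝ) ^ s * Real.log (1 + (k:ℝ)) ≤ C / c * (2 ^ s * (k:ℝ) ^ s) := by nlinarith
      have := (mul_le_mul_iff_left₀ hrpos).mp (by nlinarith : Real.log (1 + (k:ℝ)) * (k:ℝ)^s ≤ K * (k:ℝ)^s)
      linarith [this]
    -- now pick a big even k
    set n := ⌈Real.exp K⌉₊ + 1 with hn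
    have hkey := key (2 * n) (by omega) (even_two_mul n)
    have hbig : Real.exp K < 1 + ((2 * n : ℕ) : ℝ) := by
      have h1 : Real.exp K ≤ (⌈Real.exp K⌉₊ : ℝ) := Nat.le_ceil _
      have h2 : ((⌈Real.exp K⌉₊ : ℕ) : ℝ) < ((2 * n : ℕ) : ℝ) := by
        exact_mod_cast (by omega : ⌈Real.exp K⌉₊ < 2 * n)
      linarith
    have : K < Real.log (1 + ((2*n : ℕ) : ℝ)) := by
      calc K = Real.log (Real.exp K) := (Real.log_exp K).symm
        _ < Real.log (1 + ((2*n : ℕ) : ℝ)) := Real.log_lt_log (Real.exp_pos K) hbig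
    linarith
end

section
/- Let ω : ℕ → (0,∞) satisfy k^s ≪ ω(k) ≪ k^{1+s} for some s ≥ 0. Suppose: (i) for every q ∈ H^s(𝕋,ℝ) the gap lengths satisfy γ_q(n) = 2|q̂(n)| + r_q(n) with {r_q(n)} ∈ h^{1+s}(ℕ); and (ii) for every q ∈ L²(𝕋,ℝ), {γ_q(n)} ∈ h^{s}(ℕ) implies q ∈ H^{s}(𝕋,ℝ). Then for every q ∈ L²(𝕋,ℝ): q ∈ H^{ω}(𝕋,ℝ) if and only if {γ_q(n)} ∈ h^{ω}(ℕ). -/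
open scoped BigOperators

private lemma aux_shift (f g : ℕ → ℝ) (hf : ∀ n, 0 ≤ f n)
    (h : ∀ n, 1 ≤ n → f n ≤ g n) (hg : Summable g) : Summable f := by
  rw [← summable_nat_add_iff 1]
  refine Summable.of_nonneg_of_le (fun n => hf _) (fun n => h (n+1) (by omega)) ?_
  exact (summable_nat_add_iff 1).mpr hg

private lemma wlow (s c₁ : ℝ) (hs : 0 ≤ s) (hc₁ : 0 < c₁) (ω : ℕ → ℝ)
    (hωlow : ∀ k : ℕ, 1 ≤ k → c₁ * (k : ℝ) ^ s ≤ ω k) (n : ℕ) (hn : 1 ≤ n) :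
    (1 + 2*(n:ℝ)) ^ s ≤ (3 ^ s / c₁) * ω n := by
  have hn1 : (1:ℝ) ≤ n := Nat.one_le_cast.mpr hn
  have h1 : (1 + 2*(n:ℝ)) ^ s ≤ (3*(n:ℝ)) ^ s :=
    Real.rpow_le_rpow (by linarith) (by linarith) hs
  have h2 : (3*(n:ℝ)) ^ s = 3 ^ s * (n:ℝ) ^ s := Real.mul_rpow (by norm_num) (by linarith)
  have h3 := hωlow n hn
  have h4 : (0:ℝ) ≤ 3 ^ s := Real.rpow_nonneg (by norm_num) s
  have h5 : (n:ℝ) ^ s ≤ ω n / c₁ := (le_div_iff₀ hc₁).mpr (by linarith [mul_comm c₁ ((n:ℝ)^s)])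
  calc (1 + 2*(n:ℝ)) ^ s ≤ 3 ^ s * (n:ℝ) ^ s := h2 ▸ h1
    _ ≤ 3 ^ s * (ω n / c₁) := by exact mul_le_mul_of_nonneg_left h5 h4
    _ = (3 ^ s / c₁) * ω n := by ring

private lemma wup (s c₂ : ℝ) (hs : 0 ≤ s) (ω : ℕ → ℝ)
    (hωup : ∀ k : ℕ, 1 ≤ k → ω k ≤ c₂ * (k : ℝ) ^ (1+s)) (hc₂ : 0 < c₂) (n : ℕ) (hn : 1 ≤ n) :
    ω n ≤ c₂ * (1 + 2*(n:ℝ)) ^ (1+s) := by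
  have hn1 : (1:ℝ) ≤ n := Nat.one_le_cast.mpr hn
  have h1 : ((n:ℝ)) ^ (1+s) ≤ (1 + 2*(n:ℝ)) ^ (1+s) :=
    Real.rpow_le_rpow (by linarith) (by linarith) (by linarith)
  exact (hωup n hn).trans (mul_le_mul_of_nonneg_left h1 hc₂.le)

/-- Abstract form of the key equivalence `q ∈ H^ω(𝕋,ℝ) ↔ {γ_q(n)} ∈ h^ω(ℕ)` for weights
with `k^s ≪ ω(k) ≪ k^{1+s}`. Here `Q` is the set of potentials `q ∈ L²(𝕋,ℝ)`,
`qhat q` the (one-sided) Fourier coefficient sequence of `q`, and `γ q` the gap-length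
sequence; hypothesis (i) is the asymptotic formula `γ_q(n) = 2|q̂(n)| + h^{1+s}(n)` and
hypothesis (ii) is the inverse implication `{γ_q} ∈ h^s ⇒ q ∈ H^s`. -/
theorem main_equivalence (s : ℝ) (hs : 0 ≤ s) (ω : ℕ → ℝ) (hωpos : ∀ k, 0 < ω k)
    (c₁ c₂ : ℝ) (hc₁ : 0 < c₁) (hc₂ : 0 < c₂)
    (hωlow : ∀ k : ℕ, 1 ≤ k → c₁ * (k : ℝ) ^ s ≤ ω k)
    (hωup : ∀ k : ℕ, 1 ≤ k → ω k ≤ c₂ * (k : ℝ) ^ (1 + s))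
    (Q : Type*) (qhat : Q → ℕ → ℂ) (γ : Q → ℕ → ℝ) (hγ : ∀ q n, 0 ≤ γ q n)
    (hyp1 : ∀ q : Q,
      Summable (fun k : ℕ => ((1 + 2 * (k : ℝ)) ^ s) ^ 2 * ‖qhat q k‖ ^ 2) →
      ∃ rq : ℕ → ℝ, (∀ n, γ q n = 2 * ‖qhat q n‖ + rq n) ∧
        Summable (fun n : ℕ => ((1 + 2 * (n : ℝ)) ^ (1 + s)) ^ 2 * (rq n) ^ 2))
    (hyp2 : ∀ q : Q,
      Summable (fun n : ℕ => ((1 + 2 * (n : ℝ)) ^ s) ^ 2 * (γ q n) ^ 2) →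
      Summable (fun k : ℕ => ((1 + 2 * (k : ℝ)) ^ s) ^ 2 * ‖qhat q k‖ ^ 2)) :
    ∀ q : Q,
      Summable (fun k : ℕ => (ω k) ^ 2 * ‖qhat q k‖ ^ 2) ↔
      Summable (fun n : ℕ => (ω n) ^ 2 * (γ q n) ^ 2) := by
  intro q
  have hωnn : ∀ k, 0 ≤ ω k := fun k => (hωpos k).le
  have habs : ∀ k, (0:ℝ) ≤ ‖qhat q k‖ := fun k => norm_nonneg _
  constructor
  · intro hq
    have hHs : Summable (fun k : ℕ => ((1 + 2 * (k : ℝ)) ^ s) ^ 2 * ‖qhat q k‖ ^ 2) := by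
      refine aux_shift _ (fun k => (3 ^ s / c₁) ^ 2 * ((ω k) ^ 2 * ‖qhat q k‖ ^ 2))
        (fun k => by positivity) (fun k hk => ?_) (hq.mul_left _)
      have h1 := wlow s c₁ hs hc₁ ω hωlow k hk
      have h2 : ((1 + 2 * (k : ℝ)) ^ s) ^ 2 ≤ ((3 ^ s / c₁) * ω k) ^ 2 :=
        pow_le_pow_left₀ (Real.rpow_nonneg (by positivity) s) h1 2
      calc ((1 + 2 * (k : ℝ)) ^ s) ^ 2 * ‖qhat q k‖ ^ 2
          ≤ ((3 ^ s / c₁) * ω k) ^ 2 * ‖qhat q k‖ ^ 2 :=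
            mul_le_mul_of_nonneg_right h2 (by positivity)
        _ = (3 ^ s / c₁) ^ 2 * ((ω k) ^ 2 * ‖qhat q k‖ ^ 2) := by ring
    obtain ⟨r, hr, hrs⟩ := hyp1 q hHs
    refine aux_shift _ (fun n => 8 * ((ω n) ^ 2 * ‖qhat q n‖ ^ 2)
        + 2 * c₂ ^ 2 * (((1 + 2 * (n : ℝ)) ^ (1 + s)) ^ 2 * (r n) ^ 2))
      (fun n => by positivity) (fun n hn => ?_)
      (((hq.mul_left 8)).add ((hrs.mul_left (2 * c₂ ^ 2))))
    have hup := wup s c₂ hs ω hωup hc₂ n hn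
    have hω2 : (ω n) ^ 2 ≤ c₂ ^ 2 * ((1 + 2 * (n : ℝ)) ^ (1 + s)) ^ 2 := by
      have := pow_le_pow_left₀ (hωnn n) hup 2
      calc (ω n) ^ 2 ≤ (c₂ * (1 + 2 * (n:ℝ)) ^ (1 + s)) ^ 2 := this
        _ = c₂ ^ 2 * ((1 + 2 * (n : ℝ)) ^ (1 + s)) ^ 2 := by ring
    have hγn := hr n
    set a := ‖qhat q n‖
    have hsq : (γ q n) ^ 2 ≤ 8 * a ^ 2 + 2 * (r n) ^ 2 := by
      rw [hγn]; nlinarith [sq_nonneg (2 * a - r n)]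
    have hωsq : (0:ℝ) ≤ (ω n) ^ 2 := by positivity
    have hrn2 : (0:ℝ) ≤ (r n) ^ 2 := by positivity
    calc (ω n) ^ 2 * (γ q n) ^ 2 ≤ (ω n) ^ 2 * (8 * a ^ 2 + 2 * (r n) ^ 2) :=
          mul_le_mul_of_nonneg_left hsq hωsq
      _ = 8 * ((ω n) ^ 2 * a ^ 2) + 2 * ((ω n) ^ 2 * (r n) ^ 2) := by ring
      _ ≤ 8 * ((ω n) ^ 2 * a ^ 2)
          + 2 * c₂ ^ 2 * (((1 + 2 * (n : ℝ)) ^ (1 + s)) ^ 2 * (r n) ^ 2) := by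
          nlinarith [mul_le_mul_of_nonneg_right hω2 hrn2]
  · intro hγω
    have hHsγ : Summable (fun n : ℕ => ((1 + 2 * (n : ℝ)) ^ s) ^ 2 * (γ q n) ^ 2) := by
      refine aux_shift _ (fun n => (3 ^ s / c₁) ^ 2 * ((ω n) ^ 2 * (γ q n) ^ 2))
        (fun n => by positivity) (fun n hn => ?_) (hγω.mul_left _)
      have h1 := wlow s c₁ hs hc₁ ω hωlow n hn
      have h2 : ((1 + 2 * (n : ℝ)) ^ s) ^ 2 ≤ ((3 ^ s / c₁) * ω n) ^ 2 :=
        pow_le_pow_left₀ (Real.rpow_nonneg (by positivity) s) h1 2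
      calc ((1 + 2 * (n : ℝ)) ^ s) ^ 2 * (γ q n) ^ 2
          ≤ ((3 ^ s / c₁) * ω n) ^ 2 * (γ q n) ^ 2 :=
            mul_le_mul_of_nonneg_right h2 (by positivity)
        _ = (3 ^ s / c₁) ^ 2 * ((ω n) ^ 2 * (γ q n) ^ 2) := by ring
    have hHs := hyp2 q hHsγ
    obtain ⟨r, hr, hrs⟩ := hyp1 q hHs
    refine aux_shift _ (fun n => (ω n) ^ 2 * (γ q n) ^ 2
        + c₂ ^ 2 * (((1 + 2 * (n : ℝ)) ^ (1 + s)) ^ 2 * (r n) ^ 2))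
      (fun n => by positivity) (fun n hn => ?_) (hγω.add (hrs.mul_left (c₂ ^ 2)))
    have hup := wup s c₂ hs ω hωup hc₂ n hn
    have hω2 : (ω n) ^ 2 ≤ c₂ ^ 2 * ((1 + 2 * (n : ℝ)) ^ (1 + s)) ^ 2 := by
      have := pow_le_pow_left₀ (hωnn n) hup 2
      calc (ω n) ^ 2 ≤ (c₂ * (1 + 2 * (n:ℝ)) ^ (1 + s)) ^ 2 := this
        _ = c₂ ^ 2 * ((1 + 2 * (n : ℝ)) ^ (1 + s)) ^ 2 := by ring
    have hγn := hr n
    set a := ‖qhat q n‖ with ha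
    have hsq : a ^ 2 ≤ (1/2) * (γ q n) ^ 2 + (1/2) * (r n) ^ 2 := by
      have h2a : 2 * a = γ q n - r n := by rw [hγn]; ring
      have h4 : 4 * a ^ 2 = (γ q n - r n) ^ 2 := by rw [← h2a]; ring
      nlinarith [sq_nonneg (γ q n + r n)]
    have hωsq : (0:ℝ) ≤ (ω n) ^ 2 := by positivity
    have hrn2 : (0:ℝ) ≤ (r n) ^ 2 := by positivity
    calc (ω n) ^ 2 * a ^ 2 ≤ (ω n) ^ 2 * ((1/2) * (γ q n) ^ 2 + (1/2) * (r n) ^ 2) :=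
          mul_le_mul_of_nonneg_left hsq hωsq
      _ = (1/2) * ((ω n) ^ 2 * (γ q n) ^ 2) + (1/2) * ((ω n) ^ 2 * (r n) ^ 2) := by ring
      _ ≤ (ω n) ^ 2 * (γ q n) ^ 2
          + c₂ ^ 2 * (((1 + 2 * (n : ℝ)) ^ (1 + s)) ^ 2 * (r n) ^ 2) := by
          nlinarith [mul_le_mul_of_nonneg_right hω2 hrn2,
            mul_nonneg hωsq (sq_nonneg (γ q n))]
end

section
/- Let s ≥ 0 and let a ∈ h^{s}(ℤ), b ∈ h^{s}(ℤ) be two-sided sequences with a(0) = b(0) = 0. Define c(k) = a(k)/k and d(k) = b(k)/k for k ≠ 0, c(0) = d(0) = 0. Then the convolution c∗d is well defined and the subsequence {(c∗d)(2n)}_{n∈ℕ} belongs to h^{1+s}(ℕ), with norm bounded by C‖a‖_{h^s}‖b‖_{h^s}. -/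
open scoped BigOperators

open scoped ENNReal
open MeasureTheory

namespace DivConvAux

noncomputable def wR (k : ℤ) : ℝ := 1 + 2 * |(k : ℝ)|

lemma wR_pos (k : ℤ) : 0 < wR k := by unfold wR; positivity

lemma one_le_wR (k : ℤ) : 1 ≤ wR k := by
  unfold wR; nlinarith [abs_nonneg ((k : ℝ))]

lemma tsum_cs (f g : ℤ → ℝ≥0∞) :
    (∑' i, f i * g i) ^ 2 ≤ (∑' i, f i ^ 2) * (∑' i, g i ^ 2) := by
  have hconj : Real.HolderConjugate 2 2 := Real.HolderConjugate.two_two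
  have h := ENNReal.lintegral_mul_le_Lp_mul_Lq (Measure.count : Measure ℤ) hconj
      (measurable_of_countable f).aemeasurable (measurable_of_countable g).aemeasurable
  rw [lintegral_count] at h
  simp only [Pi.mul_apply] at h
  have h2 : ∀ F : ℤ → ℝ≥0∞, (∫⁻ i, F i ^ (2:ℝ) ∂(Measure.count : Measure ℤ)) = ∑' i, F i ^ 2 := by
    intro F
    rw [lintegral_count]
    congr 1; ext i; rw [← ENNReal.rpow_natCast (F i) 2]; norm_num
  rw [h2 f, h2 g] at h
  calc (∑' i, f i * g i) ^ 2 ≤ ((∑' i, f i ^ 2) ^ (1/2:ℝ) * (∑' i, g i ^ 2) ^ (1/2:ℝ)) ^ 2 :=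
        pow_le_pow_left₀ zero_le h 2
    _ = (∑' i, f i ^ 2) * (∑' i, g i ^ 2) := by
        rw [mul_pow, ← ENNReal.rpow_natCast (_ ^ (1/2:ℝ)) 2, ← ENNReal.rpow_natCast (_ ^ (1/2:ℝ)) 2,
          ← ENNReal.rpow_mul, ← ENNReal.rpow_mul]
        norm_num

lemma rpow_half_sq (x : ℝ≥0∞) : (x ^ (1/2:ℝ)) ^ 2 = x := by
  rw [← ENNReal.rpow_natCast (x ^ (1/2:ℝ)) 2, ← ENNReal.rpow_mul]
  norm_num

lemma sq_add_le (x y : ℝ≥0∞) : (x + y) ^ 2 ≤ 4 * (x ^ 2 + y ^ 2) := by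
  have h1 : x + y ≤ 2 * max x y := by
    rw [two_mul]; exact add_le_add (le_max_left x y) (le_max_right x y)
  calc (x + y) ^ 2 ≤ (2 * max x y) ^ 2 := pow_le_pow_left₀ zero_le h1 2
    _ = 4 * (max x y) ^ 2 := by rw [mul_pow]; norm_num
    _ ≤ 4 * (x ^ 2 + y ^ 2) := by
        apply mul_le_mul_right
        rcases le_total x y with h | h
        · rw [max_eq_right h]; exact le_add_self
        · rw [max_eq_left h]; exact le_self_add

lemma young (X Y : ℤ → ℝ≥0∞) :
    (∑' m : ℤ, (∑' j : ℤ, X (m - j) * Y j) ^ 2) ≤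
      (∑' k : ℤ, X k ^ 2) * (∑' j : ℤ, Y j) ^ 2 := by
  have h1 : ∀ m : ℤ, (∑' j : ℤ, X (m - j) * Y j) ^ 2 ≤
      (∑' j : ℤ, X (m - j) ^ 2 * Y j) * (∑' j : ℤ, Y j) := by
    intro m
    calc (∑' j : ℤ, X (m - j) * Y j) ^ 2
        = (∑' j : ℤ, (X (m - j) * Y j ^ (1/2:ℝ)) * (Y j ^ (1/2:ℝ))) ^ 2 := by
          congr 1
          apply tsum_congr; intro j
          rw [mul_assoc, ← sq, rpow_half_sq]
      _ ≤ (∑' j : ℤ, (X (m - j) * Y j ^ (1/2:ℝ)) ^ 2) * (∑' j : ℤ, (Y j ^ (1/2:ℝ)) ^ 2) :=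
          tsum_cs _ _
      _ = (∑' j : ℤ, X (m - j) ^ 2 * Y j) * (∑' j : ℤ, Y j) := by
          congr 1
          · apply tsum_congr; intro j; rw [mul_pow, rpow_half_sq]
          · apply tsum_congr; intro j; rw [rpow_half_sq]
  calc (∑' m : ℤ, (∑' j : ℤ, X (m - j) * Y j) ^ 2)
      ≤ ∑' m : ℤ, (∑' j : ℤ, X (m - j) ^ 2 * Y j) * (∑' j : ℤ, Y j) :=
        ENNReal.tsum_le_tsum h1
    _ = (∑' m : ℤ, ∑' j : ℤ, X (m - j) ^ 2 * Y j) * (∑' j : ℤ, Y j) :=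
        ENNReal.tsum_mul_right
    _ = (∑' j : ℤ, ∑' m : ℤ, X (m - j) ^ 2 * Y j) * (∑' j : ℤ, Y j) := by
        rw [ENNReal.tsum_comm]
    _ = (∑' j : ℤ, (∑' k : ℤ, X k ^ 2) * Y j) * (∑' j : ℤ, Y j) := by
        congr 1
        apply tsum_congr; intro j
        rw [ENNReal.tsum_mul_right]
        congr 1
        exact (Equiv.subRight j).tsum_eq (fun k => X k ^ 2)
    _ = (∑' k : ℤ, X k ^ 2) * (∑' j : ℤ, Y j) ^ 2 := by
        rw [ENNReal.tsum_mul_left, sq]; ring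

lemma summable_weight : Summable (fun j : ℤ => ((wR j)⁻¹) ^ 2) := by
  have hnat : Summable (fun n : ℕ => (1 / ((n : ℝ) + 1)) ^ 2) := by
    have := Real.summable_one_div_nat_pow (p := 2) |>.2 one_lt_two
    have h2 := (summable_nat_add_iff 1).2 this
    apply h2.congr
    intro n
    push_cast
    rw [div_pow, one_pow, one_div]
  have key : ∀ k : ℤ, ((wR k)⁻¹) ^ 2 ≤ (1 / (|(k : ℝ)| + 1)) ^ 2 := by
    intro k
    have h1 : |(k : ℝ)| + 1 ≤ wR k := by unfold wR; nlinarith [abs_nonneg ((k : ℝ))]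
    have h2 : (0:ℝ) < |(k : ℝ)| + 1 := by positivity
    rw [one_div]
    apply pow_le_pow_left₀ (by have := wR_pos k; positivity)
    exact inv_anti₀ h2 h1
  apply Summable.of_nat_of_neg
  · apply Summable.of_nonneg_of_le (fun n => by positivity) (fun n => ?_) hnat
    calc ((wR (n:ℤ))⁻¹) ^ 2 ≤ (1 / (|((n:ℤ) : ℝ)| + 1)) ^ 2 := key _
      _ = (1 / ((n : ℝ) + 1)) ^ 2 := by push_cast; rw [abs_of_nonneg (by positivity)]
  · apply Summable.of_nonneg_of_le (fun n => by positivity) (fun n => ?_) hnat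
    calc ((wR (-(n:ℤ)))⁻¹) ^ 2 ≤ (1 / (|(((-(n:ℤ)) : ℤ) : ℝ)| + 1)) ^ 2 := key _
      _ = (1 / ((n : ℝ) + 1)) ^ 2 := by push_cast; rw [abs_neg, abs_of_nonneg (by positivity)]

end DivConvAux


section Main
open MeasureTheory DivConvAux
open scoped ENNReal

/-- Division by `k` followed by convolution: the even-indexed subsequence
`{(c∗d)(2n)}_{n∈ℕ}` belongs to `h^{1+s}(ℕ)` with a uniform norm bound. -/
theorem div_convolution_even_subsequence (s : ℝ) (hs : 0 ≤ s) :
    ∃ C : ℝ, 0 < C ∧ ∀ a b : ℤ → ℂ, memH s a → memH s b → a 0 = 0 → b 0 = 0 →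
      (∀ m : ℤ, Summable fun j : ℤ =>
        ‖(if m - j = 0 then 0 else a (m - j) / ((m : ℂ) - (j : ℂ))) *
          (if j = 0 then 0 else b j / (j : ℂ))‖) ∧
      Summable (fun n : ℕ => ((1 + 2 * ((n : ℝ) + 1)) ^ (1 + s)) ^ 2 *
        ‖conv (fun k => if k = 0 then 0 else a k / (k : ℂ))
          (fun k => if k = 0 then 0 else b k / (k : ℂ)) (2 * ((n : ℤ) + 1))‖ ^ 2) ∧
      Real.sqrt (∑' n : ℕ, ((1 + 2 * ((n : ℝ) + 1)) ^ (1 + s)) ^ 2 *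
        ‖conv (fun k => if k = 0 then 0 else a k / (k : ℂ))
          (fun k => if k = 0 then 0 else b k / (k : ℂ)) (2 * ((n : ℤ) + 1))‖ ^ 2) ≤
        C * hNorm s a * hNorm s b := by
  classical
  set σ : ℝ := 1 + s with hσdef
  have hσ0 : 0 ≤ σ := by simp only [hσdef]; linarith
  have hσ1 : 1 ≤ σ := by simp only [hσdef]; linarith
  -- the finite weight sum
  set S₂ : ℝ≥0∞ := ∑' j : ℤ, (ENNReal.ofReal (wR j ^ (-σ))) ^ 2 with hS₂def
  have hS₂top : S₂ ≠ ⊤ := by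
    have hle : ∀ j : ℤ, (ENNReal.ofReal (wR j ^ (-σ))) ^ 2 ≤ ENNReal.ofReal (((wR j)⁻¹) ^ 2) := by
      intro j
      rw [← ENNReal.ofReal_pow (Real.rpow_nonneg (wR_pos j).le _)]
      apply ENNReal.ofReal_le_ofReal
      apply pow_le_pow_left₀ (Real.rpow_nonneg (wR_pos j).le _)
      calc wR j ^ (-σ) ≤ wR j ^ (-1 : ℝ) :=
            Real.rpow_le_rpow_of_exponent_le (one_le_wR j) (by linarith)
        _ = (wR j)⁻¹ := Real.rpow_neg_one _
    have : S₂ ≤ ∑' j : ℤ, ENNReal.ofReal (((wR j)⁻¹) ^ 2) := ENNReal.tsum_le_tsum hle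
    rw [← ENNReal.ofReal_tsum_of_nonneg (fun j => by positivity) summable_weight] at this
    exact ne_top_of_le_ne_top ENNReal.ofReal_ne_top this
  -- global constant
  set K : ℝ≥0∞ := 648 * (ENNReal.ofReal ((2:ℝ) ^ σ)) ^ 2 * S₂ with hKdef
  have hKtop : K ≠ ⊤ := by
    apply ENNReal.mul_ne_top
    · exact ENNReal.mul_ne_top (by norm_num) (by simp [ENNReal.pow_ne_top, ENNReal.ofReal_ne_top])
    · exact hS₂top
  refine ⟨Real.sqrt K.toReal + 1, by positivity, ?_⟩
  intro a b ha hb ha0 hb0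
  set c : ℤ → ℂ := fun k => if k = 0 then 0 else a k / (k : ℂ) with hcdef
  set d : ℤ → ℂ := fun k => if k = 0 then 0 else b k / (k : ℂ) with hddef
  -- norm equalities
  have hnormc : ∀ k : ℤ, k ≠ 0 → ‖c k‖ = ‖a k‖ / |(k : ℝ)| := by
    intro k hk
    have hcast : ((k : ℤ) : ℂ) = (((k : ℝ)) : ℂ) := by push_cast; ring
    simp only [hcdef, if_neg hk, norm_div, hcast, Complex.norm_real, Real.norm_eq_abs]
  have hnormd : ∀ k : ℤ, k ≠ 0 → ‖d k‖ = ‖b k‖ / |(k : ℝ)| := by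
    intro k hk
    have hcast : ((k : ℤ) : ℂ) = (((k : ℝ)) : ℂ) := by push_cast; ring
    simp only [hddef, if_neg hk, norm_div, hcast, Complex.norm_real, Real.norm_eq_abs]
  have habs1 : ∀ k : ℤ, k ≠ 0 → (1:ℝ) ≤ |(k : ℝ)| := by
    intro k hk
    have : (1:ℤ) ≤ |k| := Int.one_le_abs (by exact hk)
    calc (1:ℝ) ≤ ((|k| : ℤ) : ℝ) := by exact_mod_cast this
      _ = |(k : ℝ)| := by push_cast; rfl
  have hc_le : ∀ k : ℤ, ‖c k‖ ≤ ‖a k‖ := by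
    intro k
    by_cases hk : k = 0
    · simp [hcdef, hk]
    · rw [hnormc k hk]
      exact div_le_self (norm_nonneg _) (habs1 k hk)
  have hd_le : ∀ k : ℤ, ‖d k‖ ≤ ‖b k‖ := by
    intro k
    by_cases hk : k = 0
    · simp [hddef, hk]
    · rw [hnormd k hk]
      exact div_le_self (norm_nonneg _) (habs1 k hk)
  -- key pointwise weighted bounds
  have hE1 : ∀ (e : ℤ → ℂ) (f : ℤ → ℂ),
      (∀ k : ℤ, k ≠ 0 → ‖e k‖ = ‖f k‖ / |(k : ℝ)|) → e 0 = 0 →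
      ∀ k : ℤ, wR k ^ σ * ‖e k‖ ≤ 3 * (wR k ^ s * ‖f k‖) := by
    intro e f hef he0 k
    by_cases hk : k = 0
    · subst hk
      rw [he0]
      simp only [norm_zero, mul_zero]
      have h0 := Real.rpow_nonneg (wR_pos 0).le s
      exact mul_nonneg (by norm_num) (mul_nonneg h0 (norm_nonneg _))
    · have hk1 := habs1 k hk
      have hkpos : (0:ℝ) < |(k : ℝ)| := by linarith
      have hw : wR k ^ σ = wR k ^ s * wR k := by
        rw [hσdef, add_comm (1:ℝ) s, Real.rpow_add (wR_pos k), Real.rpow_one]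
      have h4 : wR k / |(k : ℝ)| ≤ 3 := by
        rw [div_le_iff₀ hkpos]
        unfold wR
        linarith
      calc wR k ^ σ * ‖e k‖ = (wR k ^ s * ‖f k‖) * (wR k / |(k : ℝ)|) := by
            rw [hef k hk, hw]; ring
        _ ≤ (wR k ^ s * ‖f k‖) * 3 := by
            have h0 := Real.rpow_nonneg (wR_pos k).le s
            apply mul_le_mul_of_nonneg_left h4 (mul_nonneg h0 (norm_nonneg _))
        _ = 3 * (wR k ^ s * ‖f k‖) := by ring
  have hc0 : c 0 = 0 := by simp [hcdef]
  have hd0 : d 0 = 0 := by simp [hddef]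
  have hE1c := hE1 c a hnormc hc0
  have hE1d := hE1 d b hnormd hd0
  have hE2 : ∀ m j : ℤ, wR m ^ σ ≤ 2 ^ σ * (wR (m - j) ^ σ + wR j ^ σ) := by
    intro m j
    have htri : wR m ≤ wR (m - j) + wR j := by
      unfold wR
      have : |(m : ℝ)| ≤ |((m - j : ℤ) : ℝ)| + |(j : ℝ)| := by
        push_cast
        calc |(m : ℝ)| = |((m : ℝ) - j) + j| := by ring_nf
          _ ≤ |(m : ℝ) - j| + |(j : ℝ)| := abs_add_le _ _
      linarith
    have hmax : wR (m - j) + wR j ≤ 2 * max (wR (m - j)) (wR j) := by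
      rw [two_mul]
      exact add_le_add (le_max_left _ _) (le_max_right _ _)
    have hmaxpos : (0:ℝ) < max (wR (m - j)) (wR j) := lt_max_of_lt_left (wR_pos _)
    calc wR m ^ σ ≤ (2 * max (wR (m - j)) (wR j)) ^ σ :=
          Real.rpow_le_rpow (wR_pos m).le (htri.trans hmax) hσ0
      _ = 2 ^ σ * (max (wR (m - j)) (wR j)) ^ σ :=
          Real.mul_rpow (by norm_num) hmaxpos.le
      _ ≤ 2 ^ σ * (wR (m - j) ^ σ + wR j ^ σ) := by
          apply mul_le_mul_of_nonneg_left _ (by positivity)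
          rcases le_total (wR (m - j)) (wR j) with h | h
          · rw [max_eq_right h]
            nlinarith [Real.rpow_nonneg (wR_pos (m - j)).le σ]
          · rw [max_eq_left h]
            nlinarith [Real.rpow_nonneg (wR_pos j).le σ]
  -- ℓ² facts
  have habs_norm : ∀ z : ℂ, ‖z‖ = ‖z‖ := fun z => rfl
  have ha2 : Summable fun k : ℤ => ‖a k‖ ^ 2 := by
    apply Summable.of_nonneg_of_le (fun k => by positivity) _ ha
    intro k
    have h1 : (1:ℝ) ≤ (1 + 2 * |(k : ℝ)|) ^ s := Real.one_le_rpow (one_le_wR k) hs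
    rw [← habs_norm]
    have h2 : (1:ℝ) ≤ ((1 + 2 * |(k : ℝ)|) ^ s) ^ 2 := by nlinarith
    nlinarith [sq_nonneg (‖a k‖)]
  have hb2 : Summable fun k : ℤ => ‖b k‖ ^ 2 := by
    apply Summable.of_nonneg_of_le (fun k => by positivity) _ hb
    intro k
    have h1 : (1:ℝ) ≤ (1 + 2 * |(k : ℝ)|) ^ s := Real.one_le_rpow (one_le_wR k) hs
    rw [← habs_norm]
    have h2 : (1:ℝ) ≤ ((1 + 2 * |(k : ℝ)|) ^ s) ^ 2 := by nlinarith
    nlinarith [sq_nonneg (‖b k‖)]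
  have hsub_inj : ∀ m : ℤ, Function.Injective (fun j : ℤ => m - j) := by
    intro m x y hxy
    simpa using hxy
  have hsum_cd : ∀ m : ℤ, Summable fun j : ℤ => ‖c (m - j)‖ * ‖d j‖ := by
    intro m
    have h1 : Summable fun j : ℤ => ‖a (m - j)‖ ^ 2 := ha2.comp_injective (hsub_inj m)
    apply Summable.of_nonneg_of_le (fun j => by positivity) _ ((h1.add hb2).mul_left (1/2))
    intro j
    have h2 := hc_le (m - j)
    have h3 := hd_le j
    nlinarith [sq_nonneg (‖a (m - j)‖ - ‖b j‖), norm_nonneg (c (m - j)), norm_nonneg (d j),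
      norm_nonneg (a (m - j)), norm_nonneg (b j)]
  have hsum_cd' : ∀ m : ℤ, Summable fun j : ℤ => ‖c (m - j) * d j‖ := by
    intro m
    exact (hsum_cd m).congr (fun j => (norm_mul _ _).symm)
  -- part 1
  have part1 : ∀ m : ℤ, Summable fun j : ℤ =>
      ‖(if m - j = 0 then 0 else a (m - j) / ((m : ℂ) - (j : ℂ))) *
        (if j = 0 then 0 else b j / (j : ℂ))‖ := by
    intro m
    apply (hsum_cd' m).congr
    intro j
    have hcast : ((m : ℂ) - (j : ℂ)) = (((m - j : ℤ)) : ℂ) := by push_cast; ring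
    rw [habs_norm]
    congr 1
    simp only [hcdef, hddef, hcast]
  -- ENNReal layer
  set Cn : ℤ → ℝ≥0∞ := fun k => ENNReal.ofReal ‖c k‖ with hCndef
  set Dn : ℤ → ℝ≥0∞ := fun k => ENNReal.ofReal ‖d k‖ with hDndef
  set A : ℤ → ℝ≥0∞ := fun k => ENNReal.ofReal (wR k ^ σ * ‖c k‖) with hAdef
  set B : ℤ → ℝ≥0∞ := fun k => ENNReal.ofReal (wR k ^ σ * ‖d k‖) with hBdef
  set Sa : ℝ≥0∞ :=
    ∑' k : ℤ, ENNReal.ofReal (((1 + 2 * |(k : ℝ)|) ^ s) ^ 2 * ‖a k‖ ^ 2) with hSadef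
  set Sb : ℝ≥0∞ :=
    ∑' k : ℤ, ENNReal.ofReal (((1 + 2 * |(k : ℝ)|) ^ s) ^ 2 * ‖b k‖ ^ 2) with hSbdef
  have hmemH_nonneg : ∀ (f : ℤ → ℂ) (k : ℤ),
      0 ≤ ((1 + 2 * |(k : ℝ)|) ^ s) ^ 2 * ‖f k‖ ^ 2 := by
    intro f k
    have h0 : (0:ℝ) < 1 + 2 * |(k : ℝ)| := wR_pos k
    positivity
  have hSa_eq : Sa = ENNReal.ofReal
      (∑' k : ℤ, ((1 + 2 * |(k : ℝ)|) ^ s) ^ 2 * ‖a k‖ ^ 2) :=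
    (ENNReal.ofReal_tsum_of_nonneg (hmemH_nonneg a) ha).symm
  have hSb_eq : Sb = ENNReal.ofReal
      (∑' k : ℤ, ((1 + 2 * |(k : ℝ)|) ^ s) ^ 2 * ‖b k‖ ^ 2) :=
    (ENNReal.ofReal_tsum_of_nonneg (hmemH_nonneg b) hb).symm
  have hSa_top : Sa ≠ ⊤ := by rw [hSa_eq]; exact ENNReal.ofReal_ne_top
  have hSb_top : Sb ≠ ⊤ := by rw [hSb_eq]; exact ENNReal.ofReal_ne_top
  have hSa_toReal : Real.sqrt Sa.toReal = hNorm s a := by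
    rw [hSa_eq, ENNReal.toReal_ofReal (tsum_nonneg (hmemH_nonneg a))]
    rfl
  have hSb_toReal : Real.sqrt Sb.toReal = hNorm s b := by
    rw [hSb_eq, ENNReal.toReal_ofReal (tsum_nonneg (hmemH_nonneg b))]
    rfl
  -- weighted ℓ² bounds for A and B
  have hSAB : ∀ (e f : ℤ → ℂ), (∀ k : ℤ, wR k ^ σ * ‖e k‖ ≤ 3 * (wR k ^ s * ‖f k‖)) →
      (∑' k : ℤ, (ENNReal.ofReal (wR k ^ σ * ‖e k‖)) ^ 2) ≤
        9 * ∑' k : ℤ, ENNReal.ofReal (((1 + 2 * |(k : ℝ)|) ^ s) ^ 2 * ‖f k‖ ^ 2) := by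
    intro e f hef
    rw [← ENNReal.tsum_mul_left]
    apply ENNReal.tsum_le_tsum
    intro k
    have hw := (wR_pos k).le
    have hnn : 0 ≤ wR k ^ σ * ‖e k‖ :=
      mul_nonneg (Real.rpow_nonneg hw _) (norm_nonneg _)
    calc (ENNReal.ofReal (wR k ^ σ * ‖e k‖)) ^ 2
        = ENNReal.ofReal ((wR k ^ σ * ‖e k‖) ^ 2) := (ENNReal.ofReal_pow hnn 2).symm
      _ ≤ ENNReal.ofReal (9 * (((1 + 2 * |(k : ℝ)|) ^ s) ^ 2 * ‖f k‖ ^ 2)) := by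
          apply ENNReal.ofReal_le_ofReal
          have h1 := hef k
          have h2 : (0:ℝ) ≤ wR k ^ s * ‖f k‖ :=
            mul_nonneg (Real.rpow_nonneg hw _) (norm_nonneg _)
          have h3 : ‖f k‖ = ‖f k‖ := habs_norm (f k)
          have h4 : (1 : ℝ) + 2 * |(k : ℝ)| = wR k := rfl
          rw [h3, h4]
          nlinarith [h1, hnn, h2]
      _ = 9 * ENNReal.ofReal (((1 + 2 * |(k : ℝ)|) ^ s) ^ 2 * ‖f k‖ ^ 2) := by
          rw [ENNReal.ofReal_mul (by norm_num : (0:ℝ) ≤ 9)]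
          norm_num
  have hSA : (∑' k : ℤ, A k ^ 2) ≤ 9 * Sa := by
    simp only [hAdef, hSadef]
    exact hSAB c a hE1c
  have hSB : (∑' k : ℤ, B k ^ 2) ≤ 9 * Sb := by
    simp only [hBdef, hSbdef]
    exact hSAB d b hE1d
  -- the convolution majorant
  set G : ℤ → ℝ≥0∞ := fun m => ∑' j : ℤ, Cn (m - j) * Dn j with hGdef
  set P : ℤ → ℝ≥0∞ := fun m => ∑' j : ℤ, A (m - j) * Dn j with hPdef
  set Q : ℤ → ℝ≥0∞ := fun m => ∑' j : ℤ, B (m - j) * Cn j with hQdef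
  have hG : ∀ m : ℤ, ENNReal.ofReal ‖conv c d m‖ ≤ G m := by
    intro m
    have h0 : conv c d m = ∑' j : ℤ, c (m - j) * d j := rfl
    have h1 : ‖conv c d m‖ ≤ ∑' j : ℤ, ‖c (m - j) * d j‖ := by
      rw [h0]; exact norm_tsum_le_tsum_norm (hsum_cd' m)
    calc ENNReal.ofReal ‖conv c d m‖ ≤ ENNReal.ofReal (∑' j : ℤ, ‖c (m - j) * d j‖) :=
          ENNReal.ofReal_le_ofReal h1
      _ = ∑' j : ℤ, ENNReal.ofReal ‖c (m - j) * d j‖ :=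
          ENNReal.ofReal_tsum_of_nonneg (fun j => norm_nonneg _) (hsum_cd' m)
      _ = G m := by
          simp only [hGdef, hCndef, hDndef]
          apply tsum_congr; intro j
          rw [norm_mul, ENNReal.ofReal_mul (norm_nonneg _)]
  -- the key pointwise estimate
  have hH : ∀ m : ℤ, ENNReal.ofReal (wR m ^ σ) * G m ≤
      ENNReal.ofReal (2 ^ σ) * (P m + Q m) := by
    intro m
    have hQr : (∑' j : ℤ, Cn (m - j) * B j) = Q m := by
      have he := (Equiv.subLeft m).tsum_eq (fun j : ℤ => B (m - j) * Cn j)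
      simp only [hQdef]
      rw [← he]
      apply tsum_congr; intro j
      simp only [Equiv.subLeft_apply, sub_sub_cancel]
      ring
    calc ENNReal.ofReal (wR m ^ σ) * G m
        = ∑' j : ℤ, ENNReal.ofReal (wR m ^ σ) * (Cn (m - j) * Dn j) := by
          simp only [hGdef]; exact ENNReal.tsum_mul_left.symm
      _ ≤ ∑' j : ℤ, ENNReal.ofReal (2 ^ σ) * (A (m - j) * Dn j + Cn (m - j) * B j) := by
          apply ENNReal.tsum_le_tsum
          intro j
          have hwm := (wR_pos m).le
          have hwmj := (wR_pos (m - j)).le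
          have hwj := (wR_pos j).le
          have hcd : (0:ℝ) ≤ ‖c (m - j)‖ * ‖d j‖ :=
            mul_nonneg (norm_nonneg _) (norm_nonneg _)
          have hreal : wR m ^ σ * (‖c (m - j)‖ * ‖d j‖) ≤
              2 ^ σ * ((wR (m - j) ^ σ * ‖c (m - j)‖) * ‖d j‖ +
                ‖c (m - j)‖ * (wR j ^ σ * ‖d j‖)) := by
            have h := mul_le_mul_of_nonneg_right (hE2 m j) hcd
            calc wR m ^ σ * (‖c (m - j)‖ * ‖d j‖)
                ≤ (2 ^ σ * (wR (m - j) ^ σ + wR j ^ σ)) * (‖c (m - j)‖ * ‖d j‖) := h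
              _ = _ := by ring
          have e1 : ENNReal.ofReal (wR m ^ σ) * (Cn (m - j) * Dn j) =
              ENNReal.ofReal (wR m ^ σ * (‖c (m - j)‖ * ‖d j‖)) := by
            simp only [hCndef, hDndef]
            rw [← ENNReal.ofReal_mul (norm_nonneg _),
              ← ENNReal.ofReal_mul (Real.rpow_nonneg hwm _)]
          have e2 : ENNReal.ofReal (2 ^ σ * ((wR (m - j) ^ σ * ‖c (m - j)‖) * ‖d j‖ +
              ‖c (m - j)‖ * (wR j ^ σ * ‖d j‖))) =
              ENNReal.ofReal (2 ^ σ) * (A (m - j) * Dn j + Cn (m - j) * B j) := by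
            simp only [hAdef, hBdef, hCndef, hDndef]
            rw [ENNReal.ofReal_mul (Real.rpow_nonneg (by norm_num : (0:ℝ) ≤ 2) _)]
            congr 1
            rw [ENNReal.ofReal_add
              (mul_nonneg (mul_nonneg (Real.rpow_nonneg hwmj _) (norm_nonneg _)) (norm_nonneg _))
              (mul_nonneg (norm_nonneg _) (mul_nonneg (Real.rpow_nonneg hwj _) (norm_nonneg _))),
              ENNReal.ofReal_mul (mul_nonneg (Real.rpow_nonneg hwmj _) (norm_nonneg _)),
              ENNReal.ofReal_mul (norm_nonneg _)]
          rw [e1, ← e2]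
          exact ENNReal.ofReal_le_ofReal hreal
      _ = ENNReal.ofReal (2 ^ σ) * (P m + Q m) := by
          rw [ENNReal.tsum_mul_left, ENNReal.tsum_add]
          simp only [hPdef]
          rw [hQr]
  -- Cauchy–Schwarz for the ℓ¹ norms
  have hL1 : ∀ (e : ℤ → ℂ) (En : ℤ → ℝ≥0∞), En = (fun k => ENNReal.ofReal ‖e k‖) →
      ∀ (Ew : ℤ → ℝ≥0∞), Ew = (fun k => ENNReal.ofReal (wR k ^ σ * ‖e k‖)) →
      (∑' j : ℤ, En j) ^ 2 ≤ (∑' j : ℤ, Ew j ^ 2) * S₂ := by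
    intro e En hEn Ew hEw
    have key : ∀ j : ℤ, En j = Ew j * ENNReal.ofReal (wR j ^ (-σ)) := by
      intro j
      rw [hEn, hEw]
      simp only
      rw [← ENNReal.ofReal_mul
        (mul_nonneg (Real.rpow_nonneg (wR_pos j).le _) (norm_nonneg _))]
      congr 1
      have h1 : wR j ^ σ * wR j ^ (-σ) = 1 := by
        rw [← Real.rpow_add (wR_pos j)]; simp
      calc ‖e j‖ = ‖e j‖ * (wR j ^ σ * wR j ^ (-σ)) := by rw [h1, mul_one]
        _ = wR j ^ σ * ‖e j‖ * wR j ^ (-σ) := by ring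
    calc (∑' j : ℤ, En j) ^ 2
        = (∑' j : ℤ, Ew j * ENNReal.ofReal (wR j ^ (-σ))) ^ 2 := by
          rw [tsum_congr key]
      _ ≤ (∑' j : ℤ, Ew j ^ 2) * (∑' j : ℤ, (ENNReal.ofReal (wR j ^ (-σ))) ^ 2) :=
          tsum_cs _ _
      _ = (∑' j : ℤ, Ew j ^ 2) * S₂ := by rw [hS₂def]
  have hD1 : (∑' j : ℤ, Dn j) ^ 2 ≤ (∑' k : ℤ, B k ^ 2) * S₂ := hL1 d Dn hDndef B hBdef
  have hC1 : (∑' j : ℤ, Cn j) ^ 2 ≤ (∑' k : ℤ, A k ^ 2) * S₂ := hL1 c Cn hCndef A hAdef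
  -- main ℓ² estimate over all of ℤ
  have hU : (∑' m : ℤ, (ENNReal.ofReal (wR m ^ σ) * G m) ^ 2) ≤ K * Sa * Sb := by
    have hyoungP : (∑' m : ℤ, P m ^ 2) ≤ (∑' k : ℤ, A k ^ 2) * (∑' j : ℤ, Dn j) ^ 2 := by
      simp only [hPdef]; exact young A Dn
    have hyoungQ : (∑' m : ℤ, Q m ^ 2) ≤ (∑' k : ℤ, B k ^ 2) * (∑' j : ℤ, Cn j) ^ 2 := by
      simp only [hQdef]; exact young B Cn
    set c2 : ℝ≥0∞ := ENNReal.ofReal (2 ^ σ) with hc2def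
    calc (∑' m : ℤ, (ENNReal.ofReal (wR m ^ σ) * G m) ^ 2)
        ≤ ∑' m : ℤ, (c2 ^ 2 * 4) * (P m ^ 2 + Q m ^ 2) := by
          apply ENNReal.tsum_le_tsum
          intro m
          calc (ENNReal.ofReal (wR m ^ σ) * G m) ^ 2
              ≤ (c2 * (P m + Q m)) ^ 2 := pow_le_pow_left₀ zero_le (hH m) 2
            _ = c2 ^ 2 * (P m + Q m) ^ 2 := mul_pow _ _ 2
            _ ≤ c2 ^ 2 * (4 * (P m ^ 2 + Q m ^ 2)) := mul_le_mul_right (sq_add_le _ _) _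
            _ = (c2 ^ 2 * 4) * (P m ^ 2 + Q m ^ 2) := by ring
      _ = (c2 ^ 2 * 4) * ((∑' m : ℤ, P m ^ 2) + (∑' m : ℤ, Q m ^ 2)) := by
          rw [ENNReal.tsum_mul_left, ENNReal.tsum_add]
      _ ≤ (c2 ^ 2 * 4) * ((∑' k : ℤ, A k ^ 2) * (∑' j : ℤ, Dn j) ^ 2 +
            (∑' k : ℤ, B k ^ 2) * (∑' j : ℤ, Cn j) ^ 2) :=
          mul_le_mul_right (add_le_add hyoungP hyoungQ) _
      _ ≤ (c2 ^ 2 * 4) * ((∑' k : ℤ, A k ^ 2) * ((∑' k : ℤ, B k ^ 2) * S₂) +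
            (∑' k : ℤ, B k ^ 2) * ((∑' k : ℤ, A k ^ 2) * S₂)) :=
          mul_le_mul_right (add_le_add (mul_le_mul_right hD1 _) (mul_le_mul_right hC1 _)) _
      _ = (c2 ^ 2 * 8 * S₂) * ((∑' k : ℤ, A k ^ 2) * (∑' k : ℤ, B k ^ 2)) := by ring
      _ ≤ (c2 ^ 2 * 8 * S₂) * ((9 * Sa) * (9 * Sb)) :=
          mul_le_mul_right (mul_le_mul' hSA hSB) _
      _ = K * Sa * Sb := by rw [hKdef, hc2def]; ring
  -- restrict to the even subsequence
  have hinj : Function.Injective (fun n : ℕ => 2 * ((n : ℤ) + 1)) := by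
    intro x y h
    simp only at h
    omega
  set T : ℝ≥0∞ := ∑' n : ℕ, ENNReal.ofReal (((1 + 2 * ((n : ℝ) + 1)) ^ σ) ^ 2 *
      ‖conv c d (2 * ((n : ℤ) + 1))‖ ^ 2) with hTdef
  have hT_le : T ≤ ∑' m : ℤ, (ENNReal.ofReal (wR m ^ σ) * G m) ^ 2 := by
    have step : ∀ n : ℕ, ENNReal.ofReal (((1 + 2 * ((n : ℝ) + 1)) ^ σ) ^ 2 *
        ‖conv c d (2 * ((n : ℤ) + 1))‖ ^ 2) ≤
        (fun m : ℤ => (ENNReal.ofReal (wR m ^ σ) * G m) ^ 2) (2 * ((n : ℤ) + 1)) := by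
      intro n
      simp only
      have hW : (0:ℝ) ≤ (1 + 2 * ((n : ℝ) + 1)) ^ σ := Real.rpow_nonneg (by positivity) σ
      have habs0 : (0:ℝ) ≤ ‖conv c d (2 * ((n : ℤ) + 1))‖ := norm_nonneg _
      rw [ENNReal.ofReal_mul (by positivity), ENNReal.ofReal_pow hW, ENNReal.ofReal_pow habs0,
        ← mul_pow]
      apply pow_le_pow_left₀ zero_le
      apply mul_le_mul'
      · apply ENNReal.ofReal_le_ofReal
        apply Real.rpow_le_rpow (by positivity) ?_ hσ0
        show 1 + 2 * ((n : ℝ) + 1) ≤ wR (2 * ((n : ℤ) + 1))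
        unfold wR
        push_cast
        rw [abs_of_nonneg (by positivity)]
        linarith
      · rw [habs_norm]
        exact hG (2 * ((n : ℤ) + 1))
    calc T ≤ ∑' n : ℕ, (fun m : ℤ => (ENNReal.ofReal (wR m ^ σ) * G m) ^ 2)
          (2 * ((n : ℤ) + 1)) := ENNReal.tsum_le_tsum step
      _ ≤ ∑' m : ℤ, (ENNReal.ofReal (wR m ^ σ) * G m) ^ 2 :=
          ENNReal.tsum_comp_le_tsum_of_injective hinj _
  have hT_final : T ≤ K * Sa * Sb := hT_le.trans hU
  have hKSS_top : K * Sa * Sb ≠ ⊤ :=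
    ENNReal.mul_ne_top (ENNReal.mul_ne_top hKtop hSa_top) hSb_top
  have hT_top : T ≠ ⊤ := ne_top_of_le_ne_top hKSS_top hT_final
  -- back to real numbers
  have hr_nonneg : ∀ n : ℕ, 0 ≤ ((1 + 2 * ((n : ℝ) + 1)) ^ σ) ^ 2 *
      ‖conv c d (2 * ((n : ℤ) + 1))‖ ^ 2 := by
    intro n
    have h0 : (0:ℝ) < 1 + 2 * ((n : ℝ) + 1) := by positivity
    positivity
  have hsummable : Summable (fun n : ℕ => ((1 + 2 * ((n : ℝ) + 1)) ^ σ) ^ 2 *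
      ‖conv c d (2 * ((n : ℤ) + 1))‖ ^ 2) := by
    have h1 := ENNReal.summable_toReal hT_top
    apply h1.congr
    intro n
    exact ENNReal.toReal_ofReal (hr_nonneg n)
  have hT_ofReal : T = ENNReal.ofReal (∑' n : ℕ, ((1 + 2 * ((n : ℝ) + 1)) ^ σ) ^ 2 *
      ‖conv c d (2 * ((n : ℤ) + 1))‖ ^ 2) :=
    (ENNReal.ofReal_tsum_of_nonneg hr_nonneg hsummable).symm
  have htsum_eq : (∑' n : ℕ, ((1 + 2 * ((n : ℝ) + 1)) ^ σ) ^ 2 *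
      ‖conv c d (2 * ((n : ℤ) + 1))‖ ^ 2) = T.toReal := by
    rw [hT_ofReal, ENNReal.toReal_ofReal (tsum_nonneg hr_nonneg)]
  refine ⟨part1, hsummable, ?_⟩
  rw [htsum_eq]
  have hmono : T.toReal ≤ (K * Sa * Sb).toReal := ENNReal.toReal_mono hKSS_top hT_final
  calc Real.sqrt T.toReal ≤ Real.sqrt ((K * Sa * Sb).toReal) := Real.sqrt_le_sqrt hmono
    _ = Real.sqrt (K.toReal * Sa.toReal * Sb.toReal) := by rw [ENNReal.toReal_mul, ENNReal.toReal_mul]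
    _ = Real.sqrt K.toReal * Real.sqrt Sa.toReal * Real.sqrt Sb.toReal := by
        rw [Real.sqrt_mul (by positivity), Real.sqrt_mul ENNReal.toReal_nonneg]
    _ = Real.sqrt K.toReal * hNorm s a * hNorm s b := by rw [hSa_toReal, hSb_toReal]
    _ ≤ (Real.sqrt K.toReal + 1) * hNorm s a * hNorm s b := by
        have h1 : 0 ≤ hNorm s a := Real.sqrt_nonneg _
        have h2 : 0 ≤ hNorm s b := Real.sqrt_nonneg _
        have h3 : Real.sqrt K.toReal ≤ Real.sqrt K.toReal + 1 := by linarith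
        apply mul_le_mul_of_nonneg_right _ h2
        exact mul_le_mul_of_nonneg_right h3 h1
end Main
end
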